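/- arXiv:math-ph/9909011 — 3 statements merged into one kernel-verified Lean document; each statement's English description precedes it below -/
import Mathlib

section
/- Suppose B : ℝ² → ℝ satisfies |B(x)| ≤ C|x|^{−2−δ} for |x| large (some C, δ > 0) and B ∈ L¹_{loc}∩L^{1+ε}_{loc} for some ε > 0. Let F := (1/2π)∫_{ℝ²} B. Then for every ε' > 0 there exists R > 0 such that |φ(x) − F ln|x|| < ε' ln|x| for all |x| > R, where φ(x) = (1/2π)∫ B(y) ln|x−y| dy. -/
set_option maxHeartbeats 1000000

open MeasureTheory Real Metric Set Filter
open scoped ENNReal NNReal Topology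

noncomputable section

namespace LogPotentialAux

abbrev E2 := EuclideanSpace ℝ (Fin 2)

lemma neg_log_le_rpow_div {t a : ℝ} (ht : 0 ≤ t) (ha : 0 < a) : -Real.log t ≤ t ^ (-a) / a := by
  have h2 := Real.log_le_rpow_div (x := t⁻¹) (inv_nonneg.mpr ht) ha
  rwa [Real.log_inv, Real.inv_rpow ht, ← Real.rpow_neg ht] at h2

lemma integrableOn_rpow_half_ball :
    IntegrableOn (fun y : E2 => ‖y‖ ^ (-2⁻¹ : ℝ)) (ball (0:E2) 1) volume := by
  constructor
  · apply Measurable.aestronglyMeasurable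
    fun_prop
  · rw [hasFiniteIntegral_def]
    set V := volume (ball (0:E2) 1) with hV
    have hVlt : V < ⊤ := measure_ball_lt_top
    set s : ℕ → Set E2 := fun n => ball 0 (((2:ℝ)^n)⁻¹) \ ball 0 (((2:ℝ)^(n+1))⁻¹) with hs
    have hcover : ball (0:E2) 1 ⊆ {0} ∪ ⋃ n, s n := by
      intro y hy
      by_cases h0 : y = 0
      · exact Or.inl h0
      · have hy' : 0 < ‖y‖ := norm_pos_iff.mpr h0
        have hex : ∃ n, ((2:ℝ)^(n+1))⁻¹ ≤ ‖y‖ := by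
          obtain ⟨n, hn⟩ := exists_pow_lt_of_lt_one hy' (by norm_num : (2:ℝ)⁻¹ < 1)
          refine ⟨n, le_of_lt ?_⟩
          calc ((2:ℝ)^(n+1))⁻¹ = (2⁻¹:ℝ)^(n+1) := by rw [inv_pow]
            _ ≤ (2⁻¹:ℝ)^n := pow_le_pow_of_le_one (by norm_num) (by norm_num) (Nat.le_succ n)
            _ < ‖y‖ := hn
        refine Or.inr (mem_iUnion.mpr ⟨Nat.find hex, ?_⟩)
        have hle := Nat.find_spec hex
        have hlt : ‖y‖ < ((2:ℝ)^(Nat.find hex))⁻¹ := by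
          rcases Nat.eq_zero_or_pos (Nat.find hex) with h | h
          · rw [h]; simpa using mem_ball_zero_iff.mp hy
          · have := Nat.find_min hex (Nat.sub_lt h one_pos)
            push_neg at this
            rwa [show Nat.find hex - 1 + 1 = Nat.find hex by omega] at this
        exact ⟨mem_ball_zero_iff.mpr hlt,
          fun hmem => absurd (mem_ball_zero_iff.mp hmem) (not_lt.mpr hle)⟩
    have hbound : ∀ n, ∫⁻ y in s n, ‖(‖y‖ ^ (-2⁻¹ : ℝ))‖₊ ∂volume
        ≤ ENNReal.ofReal (2 * (2⁻¹)^n) * V := by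
      intro n
      have ha : (0:ℝ) < (2:ℝ)^(n+1) := by positivity
      have hstep : ∀ y ∈ s n, (‖(‖y‖ ^ (-2⁻¹ : ℝ))‖₊ : ℝ≥0∞) ≤ ENNReal.ofReal ((2:ℝ)^(n+1)) := by
        intro y hy
        have h1 : ((2:ℝ)^(n+1))⁻¹ ≤ ‖y‖ := not_lt.mp (fun hc => hy.2 (mem_ball_zero_iff.mpr hc))
        have hnn : (0:ℝ) ≤ ‖y‖ ^ (-2⁻¹ : ℝ) := Real.rpow_nonneg (norm_nonneg y) _
        rw [← enorm_eq_nnnorm, Real.enorm_eq_ofReal hnn]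
        apply ENNReal.ofReal_le_ofReal
        calc ‖y‖ ^ (-2⁻¹ : ℝ) ≤ (((2:ℝ)^(n+1))⁻¹) ^ (-2⁻¹ : ℝ) :=
              Real.rpow_le_rpow_of_nonpos (by positivity) h1 (by norm_num)
          _ = ((2:ℝ)^(n+1)) ^ (2⁻¹ : ℝ) := by
              rw [Real.inv_rpow ha.le, ← Real.rpow_neg ha.le, neg_neg]
          _ ≤ ((2:ℝ)^(n+1)) ^ (1 : ℝ) :=
              Real.rpow_le_rpow_of_exponent_le (one_le_pow₀ (by norm_num)) (by norm_num)
          _ = (2:ℝ)^(n+1) := Real.rpow_one _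
      calc ∫⁻ y in s n, ‖(‖y‖ ^ (-2⁻¹ : ℝ))‖₊ ∂volume
          ≤ ∫⁻ _ in s n, ENNReal.ofReal ((2:ℝ)^(n+1)) ∂volume :=
            setLIntegral_mono measurable_const hstep
        _ = ENNReal.ofReal ((2:ℝ)^(n+1)) * volume (s n) := setLIntegral_const _ _
        _ ≤ ENNReal.ofReal ((2:ℝ)^(n+1)) * volume (ball (0:E2) (((2:ℝ)^n)⁻¹)) :=
            mul_le_mul_right (measure_mono diff_subset) _
        _ = ENNReal.ofReal ((2:ℝ)^(n+1))
            * (ENNReal.ofReal ((((2:ℝ)^n)⁻¹) ^ (Module.finrank ℝ E2)) * V) := by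
            rw [Measure.addHaar_ball volume 0 (by positivity)]
        _ = ENNReal.ofReal ((2:ℝ)^(n+1) * (((2:ℝ)^n)⁻¹) ^ (2:ℕ)) * V := by
            rw [finrank_euclideanSpace_fin, ← mul_assoc, ← ENNReal.ofReal_mul (by positivity)]
        _ = ENNReal.ofReal (2 * (2⁻¹)^n) * V := by
            congr 1
            have hp : ((2:ℝ)^n) ≠ 0 := by positivity
            rw [inv_pow, pow_succ, inv_pow]
            field_simp
    calc ∫⁻ y in ball (0:E2) 1, ‖(‖y‖ ^ (-2⁻¹ : ℝ))‖₊ ∂volume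
        ≤ ∫⁻ y in ({0} ∪ ⋃ n, s n : Set E2), ‖(‖y‖ ^ (-2⁻¹ : ℝ))‖₊ ∂volume :=
          lintegral_mono_set hcover
      _ ≤ (∫⁻ y in ({0} : Set E2), ‖(‖y‖ ^ (-2⁻¹ : ℝ))‖₊ ∂volume)
          + ∫⁻ y in (⋃ n, s n : Set E2), ‖(‖y‖ ^ (-2⁻¹ : ℝ))‖₊ ∂volume := lintegral_union_le _ _ _
      _ ≤ 0 + ∑' n, ∫⁻ y in s n, ‖(‖y‖ ^ (-2⁻¹ : ℝ))‖₊ ∂volume := by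
          gcongr
          · rw [Measure.restrict_eq_zero.mpr (measure_singleton 0), lintegral_zero_measure]
          · exact lintegral_iUnion_le _ _
      _ ≤ 0 + ∑' n, ENNReal.ofReal (2 * (2⁻¹)^n) * V := by
          gcongr with n
          exact hbound n
      _ < ⊤ := by
          rw [zero_add, ENNReal.tsum_mul_right]
          apply ENNReal.mul_lt_top _ hVlt
          have h : ∀ n : ℕ, ENNReal.ofReal (2 * (2⁻¹)^n) = 2 * (2⁻¹ : ℝ≥0∞)^n := by
            intro n
            rw [ENNReal.ofReal_mul (by norm_num), ENNReal.ofReal_pow (by norm_num),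
              ENNReal.ofReal_ofNat, ENNReal.ofReal_inv_of_pos (by norm_num), ENNReal.ofReal_ofNat]
          simp_rw [h]
          rw [ENNReal.tsum_mul_left, ENNReal.tsum_geometric, ENNReal.one_sub_inv_two]
          simp [ENNReal.mul_lt_top, ENNReal.inv_lt_top]

lemma integrableOn_rpow_tail {b : ℝ} (hb : 2 < b) :
    IntegrableOn (fun y : E2 => ‖y‖ ^ (-b)) (ball (0:E2) 1)ᶜ volume := by
  have hfin : (Module.finrank ℝ E2 : ℝ) < b := by
    rw [finrank_euclideanSpace_fin]; exact_mod_cast hb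
  have hint : Integrable (fun y : E2 => (2:ℝ)^b * (1 + ‖y‖) ^ (-b)) volume :=
    (integrable_one_add_norm hfin).const_mul _
  refine (hint.integrableOn).mono' ?_ ?_
  · exact ((measurable_norm.pow_const _).aestronglyMeasurable (β := ℝ)).restrict
  · refine (ae_restrict_iff' measurableSet_ball.compl).mpr (Eventually.of_forall ?_)
    intro y hy
    have h1 : (1:ℝ) ≤ ‖y‖ := by simpa using (mem_ball_zero_iff (E := E2)).not.mp hy
    have h0 : (0:ℝ) < ‖y‖ := by linarith
    have h2 : (1:ℝ) + ‖y‖ ≤ 2 * ‖y‖ := by linarith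
    have h3 : (2 * ‖y‖ : ℝ) ^ (-b) ≤ (1 + ‖y‖) ^ (-b) :=
      Real.rpow_le_rpow_of_nonpos (by positivity) h2 (by linarith)
    have h4 : (2 * ‖y‖ : ℝ) ^ (-b) = (2:ℝ)^(-b) * ‖y‖ ^ (-b) :=
      Real.mul_rpow (by norm_num) (norm_nonneg y)
    have h5 : (0:ℝ) < (2:ℝ)^b := by positivity
    rw [Real.norm_eq_abs, abs_of_nonneg (Real.rpow_nonneg (norm_nonneg y) _)]
    calc ‖y‖ ^ (-b) = (2:ℝ)^b * ((2:ℝ)^(-b) * ‖y‖ ^ (-b)) := by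
          rw [← mul_assoc, ← Real.rpow_add (by norm_num : (0:ℝ) < 2), add_neg_cancel,
            Real.rpow_zero, one_mul]
      _ = (2:ℝ)^b * (2 * ‖y‖ : ℝ) ^ (-b) := by rw [h4]
      _ ≤ (2:ℝ)^b * (1 + ‖y‖) ^ (-b) := by nlinarith [h3]

lemma ball_sub_preimage (x : E2) :
    (fun y : E2 => x - y) ⁻¹' (ball (0:E2) 1) = ball x 1 := by
  ext y
  simp [mem_ball, dist_eq_norm, norm_sub_rev]

lemma integrableOn_sub_rpow_ball (x : E2) :
    IntegrableOn (fun y : E2 => ‖x - y‖ ^ (-2⁻¹ : ℝ)) (ball x 1) volume := by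
  have hemb : MeasurableEmbedding (fun y : E2 => x - y) :=
    (MeasurableEquiv.subLeft x).measurableEmbedding
  have := ((Measure.measurePreserving_sub_left volume x).integrableOn_comp_preimage hemb
    (s := ball (0:E2) 1)).mpr integrableOn_rpow_half_ball
  rwa [ball_sub_preimage] at this

lemma setIntegral_sub_rpow_ball (x : E2) :
    ∫ y in ball x 1, ‖x - y‖ ^ (-2⁻¹ : ℝ) = ∫ y in ball (0:E2) 1, ‖y‖ ^ (-2⁻¹ : ℝ) := by
  have hemb : MeasurableEmbedding (fun y : E2 => x - y) :=
    (MeasurableEquiv.subLeft x).measurableEmbedding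
  have := (Measure.measurePreserving_sub_left volume x).setIntegral_preimage_emb hemb
    (fun z => ‖z‖ ^ (-2⁻¹ : ℝ)) (ball (0:E2) 1)
  rwa [ball_sub_preimage] at this

end LogPotentialAux

open LogPotentialAux

/-- For a field with powerlike decay of order `2+δ` and local `L^{1+ε}` regularity,
the logarithmic potential `φ` satisfies `|φ(x) − F log|x|| < ε' log|x|` for large `|x|`. -/
theorem log_potential_asymptotics
    (B : EuclideanSpace ℝ (Fin 2) → ℝ) (δ ε C R₀ : ℝ)
    (hδ : 0 < δ) (hε : 0 < ε) (hC : 0 < C) (hR₀ : 0 < R₀)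
    (hmeas : Measurable B)
    (hdecay : ∀ x, R₀ ≤ ‖x‖ → |B x| ≤ C * ‖x‖ ^ (-(2 + δ)))
    (hloc1 : LocallyIntegrable B volume)
    (hlocε : ∀ K : Set (EuclideanSpace ℝ (Fin 2)), IsCompact K →
      MemLp B (ENNReal.ofReal (1 + ε)) (volume.restrict K)) :
    ∀ ε' > 0, ∃ R > 0, ∀ x : EuclideanSpace ℝ (Fin 2), R < ‖x‖ →
      |(1 / (2 * π)) * (∫ y, B y * Real.log ‖x - y‖)
          - ((1 / (2 * π)) * ∫ y, B y) * Real.log ‖x‖|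
        < ε' * Real.log ‖x‖ := by
  intro ε' hε'
  have hπ := Real.pi_pos
  set e3 := π * ε' with he3def
  have he3 : 0 < e3 := by positivity
  -- global integrability of B
  have hBint : Integrable B volume := by
    set M₀ := max R₀ 1 with hM₀
    have hM₀1 : (1:ℝ) ≤ M₀ := le_max_right _ _
    have hM₀R : R₀ ≤ M₀ := le_max_left _ _
    have h1 : IntegrableOn B (closedBall (0:E2) M₀) volume :=
      hloc1.integrableOn_isCompact (isCompact_closedBall _ _)
    have h2 : IntegrableOn B (closedBall (0:E2) M₀)ᶜ volume := by
      have htail : IntegrableOn (fun y : E2 => C * ‖y‖ ^ (-(2+δ)))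
          (closedBall (0:E2) M₀)ᶜ volume := by
        have htail0 : IntegrableOn (fun y : E2 => C * ‖y‖ ^ (-(2+δ)))
            (ball (0:E2) 1)ᶜ volume := (integrableOn_rpow_tail (by linarith)).const_mul C
        refine htail0.mono_set ?_
        intro y hy
        simp only [mem_compl_iff, mem_closedBall_zero_iff, not_le] at hy
        simp only [mem_compl_iff, mem_ball_zero_iff, not_lt]
        linarith
      refine htail.mono' (hmeas.aestronglyMeasurable.restrict) ?_
      refine (ae_restrict_iff' measurableSet_closedBall.compl).mpr (Eventually.of_forall ?_)
      intro y hy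
      simp only [mem_compl_iff, mem_closedBall_zero_iff, not_le] at hy
      rw [Real.norm_eq_abs]
      exact hdecay y (by linarith)
    have := h1.union h2
    rwa [union_compl_self, integrableOn_univ] at this
  have hBabs : Integrable (fun y => |B y|) volume := hBint.abs
  set M := ∫ y, |B y| with hMdef
  have hM0 : 0 ≤ M := integral_nonneg fun y => abs_nonneg _
  -- constants
  set g4 : E2 → ℝ := fun y => ‖y‖ ^ (-(2+δ/4)) with hg4def
  have hg4int : IntegrableOn g4 (ball (0:E2) 1)ᶜ volume := integrableOn_rpow_tail (by linarith)
  have hg4nn : ∀ y : E2, 0 ≤ g4 y := fun y => Real.rpow_nonneg (norm_nonneg y) _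
  set K1 := ∫ y in (ball (0:E2) 1)ᶜ, g4 y with hK1def
  have hK10 : 0 ≤ K1 := setIntegral_nonneg measurableSet_ball.compl fun y _ => hg4nn y
  set K2 := ∫ y in ball (0:E2) 1, ‖y‖ ^ (-2⁻¹ : ℝ) with hK2def
  have hK20 : 0 ≤ K2 :=
    setIntegral_nonneg measurableSet_ball fun y _ => Real.rpow_nonneg (norm_nonneg y) _
  set V := (volume (ball (0:E2) 1)).toReal with hVdef
  have hV0 : 0 ≤ V := ENNReal.toReal_nonneg
  set c2 := C * ((4/δ) * (3:ℝ) ^ (δ/2)) with hc2def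
  have hc20 : 0 ≤ c2 := by positivity
  set c5 := C * V * ((4/δ) * (2:ℝ) ^ (δ/4)) + 2 * C * K2 with hc5def
  have hc50 : 0 ≤ c5 := by positivity
  set cT := c2 * K1 + c5 with hcTdef
  have hcT0 : 0 ≤ cT := by positivity
  -- eventual conditions
  have hev : ∀ᶠ t : ℝ in atTop, 2 * max R₀ 1 < t ∧ 1 < Real.log t ∧
      M * Real.log 2 < e3 * Real.log t ∧ cT * (t/2) ^ (-(δ/4)) < e3 := by
    have ev1 : ∀ᶠ t : ℝ in atTop, 2 * max R₀ 1 < t := eventually_gt_atTop _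
    have ev2 : ∀ᶠ t : ℝ in atTop, 1 < Real.log t :=
      Real.tendsto_log_atTop.eventually_gt_atTop 1
    have ev3 : ∀ᶠ t : ℝ in atTop, M * Real.log 2 < e3 * Real.log t :=
      (Real.tendsto_log_atTop.const_mul_atTop he3).eventually_gt_atTop _
    have ev4 : ∀ᶠ t : ℝ in atTop, cT * (t/2) ^ (-(δ/4)) < e3 := by
      have h1 : Tendsto (fun t : ℝ => (t/2) ^ (-(δ/4))) atTop (𝓝 0) :=
        (tendsto_rpow_neg_atTop (by positivity)).comp
          (tendsto_id.atTop_div_const (by norm_num : (0:ℝ) < 2))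
      have h2 : Tendsto (fun t : ℝ => cT * (t/2) ^ (-(δ/4))) atTop (𝓝 (cT * 0)) :=
        h1.const_mul cT
      rw [mul_zero] at h2
      exact h2.eventually_lt_const he3
    filter_upwards [ev1, ev2, ev3, ev4] with t h1 h2 h3 h4
    exact ⟨h1, h2, h3, h4⟩
  obtain ⟨R₁, hR₁⟩ := eventually_atTop.mp hev
  refine ⟨max R₁ 1, lt_of_lt_of_le one_pos (le_max_right _ _), ?_⟩
  intro x hx
  obtain ⟨hcond1, hcond2, hcond3, hcond45⟩ :=
    hR₁ ‖x‖ (le_of_lt (lt_of_le_of_lt (le_max_left _ _) hx))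
  set t := ‖x‖ with htdef
  set r := t / 2 with hrdef
  have hr1 : 1 < r := by
    have : (1:ℝ) ≤ max R₀ 1 := le_max_right _ _
    rw [hrdef]; linarith
  have hrR0 : R₀ < r := by
    have : R₀ ≤ max R₀ 1 := le_max_left _ _
    rw [hrdef]; linarith
  have hr0 : 0 < r := by linarith
  have ht0 : 0 < t := by rw [htdef] at hcond1 ⊢; linarith [le_max_right R₀ 1]
  have htr : t = 2 * r := by rw [hrdef]; ring
  have hL0 : 0 < Real.log t := lt_trans one_pos hcond2
  have hL1 : 1 ≤ Real.log t := hcond2.le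
  -- the sets
  set S1 : Set E2 := closedBall 0 r with hS1def
  set Bx : Set E2 := ball x 1 with hBxdef
  set S2 : Set E2 := S1ᶜ \ Bx with hS2def
  set S3 : Set E2 := S1ᶜ ∩ Bx with hS3def
  have hS1meas : MeasurableSet S1 := measurableSet_closedBall
  have hS2meas : MeasurableSet S2 := measurableSet_closedBall.compl.diff measurableSet_ball
  have hS3meas : MeasurableSet S3 := measurableSet_closedBall.compl.inter measurableSet_ball
  -- the integrand
  set fx : E2 → ℝ := fun y => B y * (Real.log ‖x - y‖ - Real.log t) with hfxdef
  have hfxmeas : Measurable fx := by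
    apply hmeas.mul
    exact (Real.measurable_log.comp ((continuous_const.sub continuous_id).norm.measurable)).sub
      measurable_const
  -- region 1 : pointwise bound
  have hb1 : ∀ y ∈ S1, |fx y| ≤ Real.log 2 * |B y| := by
    intro y hy
    rw [hS1def, mem_closedBall_zero_iff] at hy
    have hxy1 : r ≤ ‖x - y‖ := by
      have := norm_sub_norm_le x y
      rw [← htdef] at this
      linarith
    have hxy2 : ‖x - y‖ ≤ 3 * r := by
      have := norm_sub_le x y
      rw [← htdef] at this
      linarith
    have hxy0 : 0 < ‖x - y‖ := by linarith
    have hlog2 : |Real.log ‖x - y‖ - Real.log t| ≤ Real.log 2 := by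
      have l1 : Real.log ‖x - y‖ ≤ Real.log 3 + Real.log r := by
        have := Real.log_le_log hxy0 hxy2
        rwa [Real.log_mul (by norm_num) hr0.ne'] at this
      have l2 : Real.log r ≤ Real.log ‖x - y‖ := Real.log_le_log hr0 hxy1
      have l3 : Real.log t = Real.log 2 + Real.log r := by
        rw [htr, Real.log_mul (by norm_num) hr0.ne']
      have l4 : Real.log 3 ≤ 2 * Real.log 2 := by
        have h34 : Real.log 3 ≤ Real.log 4 := Real.log_le_log (by norm_num) (by norm_num)
        have h4 : Real.log 4 = 2 * Real.log 2 := by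
          rw [show (4:ℝ) = 2^2 by norm_num, Real.log_pow]
          push_cast; ring
        linarith
      rw [abs_le]
      constructor <;> linarith
    calc |fx y| = |B y| * |Real.log ‖x - y‖ - Real.log t| := abs_mul _ _
      _ ≤ |B y| * Real.log 2 := by
          exact mul_le_mul_of_nonneg_left hlog2 (abs_nonneg _)
      _ = Real.log 2 * |B y| := mul_comm _ _
  -- region 1 : integrability
  have hfx1 : IntegrableOn fx S1 volume := by
    refine Integrable.mono' ((hBabs.const_mul (Real.log 2)).integrableOn)
      hfxmeas.aestronglyMeasurable.restrict ?_
    refine (ae_restrict_iff' hS1meas).mpr (Eventually.of_forall ?_)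
    intro y hy
    rw [Real.norm_eq_abs]
    exact hb1 y hy
  -- region 1 : integral bound
  have hT1 : ∫ y in S1, |fx y| ≤ Real.log 2 * M := by
    calc ∫ y in S1, |fx y| ≤ ∫ y in S1, Real.log 2 * |B y| :=
          setIntegral_mono_on hfx1.abs ((hBabs.const_mul _).integrableOn) hS1meas hb1
      _ = Real.log 2 * ∫ y in S1, |B y| := integral_const_mul _ _
      _ ≤ Real.log 2 * M := by
          refine mul_le_mul_of_nonneg_left ?_ (Real.log_nonneg one_le_two)
          exact setIntegral_le_integral hBabs (Eventually.of_forall fun y => abs_nonneg _)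
  -- region 2 : pointwise bound
  have hb2 : ∀ y ∈ S2, |fx y| ≤ (c2 * r ^ (-(δ/4))) * g4 y := by
    intro y hy
    obtain ⟨hy1', hy2'⟩ := hy
    rw [hS1def, mem_compl_iff, mem_closedBall_zero_iff, not_le] at hy1'
    rw [hBxdef, mem_ball, not_lt, dist_eq_norm, ← norm_sub_rev] at hy2'
    have hyp : 0 < ‖y‖ := by linarith
    have hxy0 : (0:ℝ) < ‖x - y‖ := by linarith
    have hd2 : 0 < δ/2 := by linarith
    have hBy : |B y| ≤ C * ‖y‖ ^ (-(2+δ)) := hdecay y (by linarith)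
    have l1 : Real.log ‖x - y‖ ≤ (3:ℝ)^(δ/2) * ‖y‖^(δ/2) / (δ/2) := by
      calc Real.log ‖x - y‖ ≤ Real.log (3 * ‖y‖) := by
            refine Real.log_le_log hxy0 ?_
            have := norm_sub_le x y
            rw [← htdef] at this
            linarith
        _ ≤ (3 * ‖y‖)^(δ/2) / (δ/2) := Real.log_le_rpow_div (by positivity) hd2
        _ = (3:ℝ)^(δ/2) * ‖y‖^(δ/2) / (δ/2) := by
            rw [Real.mul_rpow (by norm_num) hyp.le]
    have l2 : Real.log t ≤ (2:ℝ)^(δ/2) * ‖y‖^(δ/2) / (δ/2) := by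
      calc Real.log t ≤ Real.log (2 * ‖y‖) := Real.log_le_log ht0 (by rw [htr]; linarith)
        _ ≤ (2 * ‖y‖)^(δ/2) / (δ/2) := Real.log_le_rpow_div (by positivity) hd2
        _ = (2:ℝ)^(δ/2) * ‖y‖^(δ/2) / (δ/2) := by
            rw [Real.mul_rpow (by norm_num) hyp.le]
    have l3 : (2:ℝ)^(δ/2) * ‖y‖^(δ/2) / (δ/2) ≤ (3:ℝ)^(δ/2) * ‖y‖^(δ/2) / (δ/2) := by
      have hq : (2:ℝ)^(δ/2) * ‖y‖^(δ/2) ≤ (3:ℝ)^(δ/2) * ‖y‖^(δ/2) :=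
        mul_le_mul_of_nonneg_right (Real.rpow_le_rpow (by norm_num) (by norm_num) hd2.le)
          (Real.rpow_nonneg (norm_nonneg y) _)
      exact div_le_div_of_nonneg_right hq hd2.le
    have e1 : Real.log ‖x - y‖ + Real.log t ≤ (4/δ) * (3:ℝ)^(δ/2) * ‖y‖^(δ/2) := by
      have heq : (4/δ) * (3:ℝ)^(δ/2) * ‖y‖^(δ/2) = 2 * ((3:ℝ)^(δ/2) * ‖y‖^(δ/2) / (δ/2)) := by
        field_simp
        ring
      rw [heq]
      linarith
    have e2 : |Real.log ‖x - y‖ - Real.log t| ≤ Real.log ‖x - y‖ + Real.log t := by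
      have la : 0 ≤ Real.log ‖x - y‖ := Real.log_nonneg hy2'
      have lb : 0 ≤ Real.log t := by linarith
      rw [abs_le]; constructor <;> linarith
    calc |fx y| = |B y| * |Real.log ‖x - y‖ - Real.log t| := abs_mul _ _
      _ ≤ (C * ‖y‖ ^ (-(2+δ))) * ((4/δ) * (3:ℝ)^(δ/2) * ‖y‖^(δ/2)) :=
          mul_le_mul hBy (e2.trans e1) (abs_nonneg _) (by positivity)
      _ = c2 * (‖y‖ ^ (-(2+δ)) * ‖y‖^(δ/2)) := by rw [hc2def]; ring
      _ = c2 * (‖y‖ ^ (-(δ/4)) * ‖y‖ ^ (-(2+δ/4))) := by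
          rw [← Real.rpow_add hyp, ← Real.rpow_add hyp]
          congr 1
          ring_nf
      _ ≤ c2 * (r ^ (-(δ/4)) * ‖y‖ ^ (-(2+δ/4))) := by
          have hm : ‖y‖ ^ (-(δ/4)) ≤ r ^ (-(δ/4)) :=
            Real.rpow_le_rpow_of_nonpos hr0 hy1'.le (by linarith)
          have hpp : (0:ℝ) ≤ ‖y‖ ^ (-(2+δ/4)) := Real.rpow_nonneg (norm_nonneg y) _
          exact mul_le_mul_of_nonneg_left (mul_le_mul_of_nonneg_right hm hpp) hc20
      _ = (c2 * r ^ (-(δ/4))) * g4 y := by rw [hg4def]; ring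
  -- region 2 : integrability of dominator and fx
  have hS2sub : S2 ⊆ (ball (0:E2) 1)ᶜ := by
    intro y hy
    obtain ⟨hy1', _⟩ := hy
    rw [hS1def, mem_compl_iff, mem_closedBall_zero_iff, not_le] at hy1'
    rw [mem_compl_iff, mem_ball_zero_iff, not_lt]
    linarith
  have hdom2' : IntegrableOn (fun y => (c2 * r ^ (-(δ/4))) * g4 y) (ball (0:E2) 1)ᶜ volume :=
    hg4int.const_mul _
  have hdom2 : IntegrableOn (fun y => (c2 * r ^ (-(δ/4))) * g4 y) S2 volume :=
    hdom2'.mono_set hS2sub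
  have hfx2 : IntegrableOn fx S2 volume := by
    refine Integrable.mono' hdom2 hfxmeas.aestronglyMeasurable.restrict ?_
    refine (ae_restrict_iff' hS2meas).mpr (Eventually.of_forall ?_)
    intro y hy
    rw [Real.norm_eq_abs]
    exact hb2 y hy
  -- region 2 : integral bound
  have hT2 : ∫ y in S2, |fx y| ≤ (c2 * r ^ (-(δ/4))) * K1 := by
    calc ∫ y in S2, |fx y| ≤ ∫ y in S2, (c2 * r ^ (-(δ/4))) * g4 y :=
          setIntegral_mono_on hfx2.abs hdom2 hS2meas hb2
      _ = (c2 * r ^ (-(δ/4))) * ∫ y in S2, g4 y := integral_const_mul _ _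
      _ ≤ (c2 * r ^ (-(δ/4))) * K1 := by
          refine mul_le_mul_of_nonneg_left ?_ (by positivity)
          refine setIntegral_mono_set hg4int ?_ (HasSubset.Subset.eventuallyLE hS2sub)
          exact Eventually.of_forall fun y => hg4nn y
  -- region 3 : pointwise bound
  have hb3 : ∀ y ∈ S3, |fx y| ≤
      (C * r ^ (-(2+δ))) * (Real.log t + 2 * ‖x - y‖ ^ (-2⁻¹ : ℝ)) := by
    intro y hy
    obtain ⟨hy1', hy2'⟩ := hy
    rw [hS1def, mem_compl_iff, mem_closedBall_zero_iff, not_le] at hy1'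
    rw [hBxdef, mem_ball, dist_eq_norm, ← norm_sub_rev] at hy2'
    have hyp : 0 < ‖y‖ := by linarith
    have hBy : |B y| ≤ C * r ^ (-(2+δ)) := by
      refine (hdecay y (by linarith)).trans ?_
      refine mul_le_mul_of_nonneg_left ?_ hC.le
      exact Real.rpow_le_rpow_of_nonpos hr0 hy1'.le (by linarith)
    have hp0 : (0:ℝ) ≤ ‖x - y‖ ^ (-2⁻¹ : ℝ) := Real.rpow_nonneg (norm_nonneg _) _
    have hlog : |Real.log ‖x - y‖ - Real.log t| ≤ Real.log t + 2 * ‖x - y‖ ^ (-2⁻¹ : ℝ) := by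
      have la : Real.log ‖x - y‖ ≤ 0 := Real.log_nonpos (norm_nonneg _) hy2'.le
      have lb : 0 ≤ Real.log t := by linarith
      have lc : -Real.log ‖x - y‖ ≤ ‖x - y‖ ^ (-2⁻¹ : ℝ) / 2⁻¹ :=
        neg_log_le_rpow_div (norm_nonneg _) (by norm_num)
      have ld : ‖x - y‖ ^ (-2⁻¹ : ℝ) / 2⁻¹ = 2 * ‖x - y‖ ^ (-2⁻¹ : ℝ) := by ring
      rw [ld] at lc
      rw [abs_le]; constructor <;> linarith
    calc |fx y| = |B y| * |Real.log ‖x - y‖ - Real.log t| := abs_mul _ _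
      _ ≤ (C * r ^ (-(2+δ))) * (Real.log t + 2 * ‖x - y‖ ^ (-2⁻¹ : ℝ)) :=
          mul_le_mul hBy hlog (abs_nonneg _) (by positivity)
  -- region 3 : integrability of the dominator
  have hi1 : IntegrableOn (fun _ : E2 => Real.log t) Bx volume :=
    integrableOn_const measure_ball_lt_top.ne
  have hi2 : IntegrableOn (fun y : E2 => ‖x - y‖ ^ (-2⁻¹ : ℝ)) Bx volume :=
    integrableOn_sub_rpow_ball x
  have hdom3ball : IntegrableOn
      (fun y => (C * r ^ (-(2+δ))) * (Real.log t + 2 * ‖x - y‖ ^ (-2⁻¹ : ℝ))) Bx volume := by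
    exact Integrable.const_mul (hi1.add (Integrable.const_mul hi2 2)) _
  have hdom3 : IntegrableOn
      (fun y => (C * r ^ (-(2+δ))) * (Real.log t + 2 * ‖x - y‖ ^ (-2⁻¹ : ℝ))) S3 volume :=
    hdom3ball.mono_set inter_subset_right
  have hfx3 : IntegrableOn fx S3 volume := by
    refine Integrable.mono' hdom3 hfxmeas.aestronglyMeasurable.restrict ?_
    refine (ae_restrict_iff' hS3meas).mpr (Eventually.of_forall ?_)
    intro y hy
    rw [Real.norm_eq_abs]
    exact hb3 y hy
  -- region 3 : integral bound
  have hVball : (volume (ball x 1)).toReal = V := by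
    rw [hVdef, Measure.addHaar_ball_center]
  have hT3 : ∫ y in S3, |fx y| ≤ c5 * r ^ (-(δ/4)) := by
    have hstep1 : ∫ y in S3, |fx y| ≤
        ∫ y in Bx, (C * r ^ (-(2+δ))) * (Real.log t + 2 * ‖x - y‖ ^ (-2⁻¹ : ℝ)) := by
      calc ∫ y in S3, |fx y|
          ≤ ∫ y in S3, (C * r ^ (-(2+δ))) * (Real.log t + 2 * ‖x - y‖ ^ (-2⁻¹ : ℝ)) :=
            setIntegral_mono_on hfx3.abs hdom3 hS3meas hb3
        _ ≤ ∫ y in Bx, (C * r ^ (-(2+δ))) * (Real.log t + 2 * ‖x - y‖ ^ (-2⁻¹ : ℝ)) := by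
            refine setIntegral_mono_set hdom3ball ?_
              (HasSubset.Subset.eventuallyLE inter_subset_right)
            refine Eventually.of_forall fun y => ?_
            have h1 : (0:ℝ) ≤ ‖x - y‖ ^ (-2⁻¹ : ℝ) := Real.rpow_nonneg (norm_nonneg _) _
            refine mul_nonneg (by positivity) (add_nonneg (by linarith) (by linarith))
    have hstep2 : ∫ y in Bx, (C * r ^ (-(2+δ))) * (Real.log t + 2 * ‖x - y‖ ^ (-2⁻¹ : ℝ))
        = (C * r ^ (-(2+δ))) * (Real.log t * V + 2 * K2) := by
      rw [integral_const_mul, integral_add hi1 (hi2.const_mul 2), setIntegral_const,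
        integral_const_mul, hBxdef, setIntegral_sub_rpow_ball, ← hK2def, measureReal_def, hVball]
      simp only [smul_eq_mul]
      ring
    have hstep3 : (C * r ^ (-(2+δ))) * (Real.log t * V + 2 * K2) ≤ c5 * r ^ (-(δ/4)) := by
      have hrp : (0:ℝ) < r ^ (-(2+δ)) := Real.rpow_pos_of_pos hr0 _
      have hlogt : Real.log t ≤ (4/δ) * (2:ℝ)^(δ/4) * r^(δ/4) := by
        have h1 : Real.log t ≤ t ^ (δ/4) / (δ/4) := Real.log_le_rpow_div ht0.le (by linarith)
        have h2 : t ^ (δ/4) = (2:ℝ)^(δ/4) * r^(δ/4) := by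
          rw [htr, Real.mul_rpow (by norm_num) hr0.le]
        have h3 : t ^ (δ/4) / (δ/4) = (4/δ) * t ^ (δ/4) := by
          field_simp
        rw [h3, h2] at h1
        linarith [h1]
      have hm1 : r ^ (-(2+δ)) * r^(δ/4) ≤ r ^ (-(δ/4)) := by
        rw [← Real.rpow_add hr0]
        exact Real.rpow_le_rpow_of_exponent_le hr1.le (by linarith)
      have hm2 : r ^ (-(2+δ)) ≤ r ^ (-(δ/4)) :=
        Real.rpow_le_rpow_of_exponent_le hr1.le (by linarith)
      have hrp4 : (0:ℝ) < r^(δ/4) := Real.rpow_pos_of_pos hr0 _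
      have expand : (C * r ^ (-(2+δ))) * (Real.log t * V + 2 * K2)
          = C * V * (Real.log t * r ^ (-(2+δ))) + 2 * C * K2 * r ^ (-(2+δ)) := by ring
      rw [expand, hc5def]
      have b1 : Real.log t * r ^ (-(2+δ)) ≤ (4/δ) * (2:ℝ)^(δ/4) * r ^ (-(δ/4)) := by
        calc Real.log t * r ^ (-(2+δ)) ≤ ((4/δ) * (2:ℝ)^(δ/4) * r^(δ/4)) * r ^ (-(2+δ)) := by
              refine mul_le_mul_of_nonneg_right hlogt hrp.le
          _ = ((4/δ) * (2:ℝ)^(δ/4)) * (r ^ (-(2+δ)) * r^(δ/4)) := by ring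
          _ ≤ ((4/δ) * (2:ℝ)^(δ/4)) * r ^ (-(δ/4)) := by
              refine mul_le_mul_of_nonneg_left hm1 (by positivity)
          _ = (4/δ) * (2:ℝ)^(δ/4) * r ^ (-(δ/4)) := by ring
      have b2 : 2 * C * K2 * r ^ (-(2+δ)) ≤ 2 * C * K2 * r ^ (-(δ/4)) := by
        refine mul_le_mul_of_nonneg_left hm2 (mul_nonneg (by positivity) hK20)
      have hCV : 0 ≤ C * V := mul_nonneg hC.le hV0
      nlinarith [mul_le_mul_of_nonneg_left b1 hCV]
    linarith [hstep1, hstep2.le, hstep2.ge, hstep3]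
  -- assembling integrability
  have hunion : S1 ∪ (S2 ∪ S3) = univ := by
    rw [hS2def, hS3def, diff_union_inter]
    exact union_compl_self S1
  have hfxint : Integrable fx volume := by
    rw [← integrableOn_univ, ← hunion]
    exact hfx1.union (hfx2.union hfx3)
  -- the key identity
  have key : (∫ y, B y * Real.log ‖x - y‖) - (∫ y, B y) * Real.log t = ∫ y, fx y := by
    have h1 : Integrable (fun y => B y * Real.log t) volume := hBint.mul_const _
    have h2 : (fun y => B y * Real.log ‖x - y‖) = fun y => fx y + B y * Real.log t := by
      funext y
      rw [hfxdef]
      ring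
    rw [h2, integral_add hfxint h1, integral_mul_const]
    ring
  -- splitting the integral of |fx|
  have hsplit : ∫ y, |fx y| = (∫ y in S1, |fx y|) + ((∫ y in S2, |fx y|) + ∫ y in S3, |fx y|) := by
    have e1 : (∫ y in S1, |fx y|) + (∫ y in S1ᶜ, |fx y|) = ∫ y, |fx y| :=
      integral_add_compl hS1meas hfxint.abs
    have e2 : (∫ y in S1ᶜ, |fx y|) = (∫ y in S2, |fx y|) + ∫ y in S3, |fx y| := by
      have : S1ᶜ = S2 ∪ S3 := by rw [hS2def, hS3def, diff_union_inter]
      have hdisj : Disjoint S2 S3 := by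
        rw [hS2def, hS3def]
        exact Set.disjoint_left.mpr fun y hy hy2 => hy.2 hy2.2
      rw [this]
      exact setIntegral_union hdisj hS3meas hfx2.abs hfx3.abs
    rw [← e1, e2]
  -- total bound
  have htotal : |∫ y, fx y| < 2 * e3 * Real.log t := by
    have habs : |∫ y, fx y| ≤ ∫ y, |fx y| := by
      simpa [Real.norm_eq_abs] using norm_integral_le_integral_norm fx (μ := volume)
    have h23 : (∫ y in S2, |fx y|) + (∫ y in S3, |fx y|) ≤ cT * r ^ (-(δ/4)) := by
      have : cT * r ^ (-(δ/4)) = (c2 * r ^ (-(δ/4))) * K1 + c5 * r ^ (-(δ/4)) := by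
        rw [hcTdef]; ring
      rw [this]
      linarith [hT2, hT3]
    have h1 : ∫ y in S1, |fx y| < e3 * Real.log t := by
      calc ∫ y in S1, |fx y| ≤ Real.log 2 * M := hT1
        _ = M * Real.log 2 := mul_comm _ _
        _ < e3 * Real.log t := hcond3
    have h2 : cT * r ^ (-(δ/4)) < e3 := by rw [hrdef]; exact hcond45
    have h3 : e3 ≤ e3 * Real.log t := le_mul_of_one_le_right he3.le hL1
    rw [hsplit] at habs
    calc |∫ y, fx y| ≤ (∫ y in S1, |fx y|) + ((∫ y in S2, |fx y|) + ∫ y in S3, |fx y|) := habs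
      _ < e3 * Real.log t + e3 * Real.log t := by linarith
      _ = 2 * e3 * Real.log t := by ring
  -- conclusion
  have hfinal : |(1 / (2 * π)) * (∫ y, B y * Real.log ‖x - y‖)
      - ((1 / (2 * π)) * ∫ y, B y) * Real.log t|
      = (1 / (2 * π)) * |(∫ y, B y * Real.log ‖x - y‖) - (∫ y, B y) * Real.log t| := by
    rw [show (1 / (2 * π)) * (∫ y, B y * Real.log ‖x - y‖)
        - ((1 / (2 * π)) * ∫ y, B y) * Real.log t
        = (1 / (2 * π)) * ((∫ y, B y * Real.log ‖x - y‖) - (∫ y, B y) * Real.log t) by ring,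
      abs_mul, abs_of_pos (by positivity : (0:ℝ) < 1 / (2 * π))]
  rw [hfinal, key]
  calc (1 / (2 * π)) * |∫ y, fx y| < (1 / (2 * π)) * (2 * e3 * Real.log t) := by
        exact mul_lt_mul_of_pos_left htotal (by positivity)
    _ = ε' * Real.log t := by
        rw [he3def]
        field_simp
end
end

section
/- Let B : ℝ² → ℝ satisfy |B(x)| ≤ C|x|^{−2−δ} at infinity, B ∈ L¹(ℝ²), and ∫_{ℝ²} B = 0. Define A_i(x) = (1/2π)∫_{ℝ²} B(x−z) z_i/|z|² dz. Then there exist μ > 0 and C' > 0 such that |A_i(x)| ≤ C'|x|^{−1−μ} for all sufficiently large |x|, i = 1,2. -/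
open MeasureTheory Real

open Metric
open scoped ENNReal

namespace GradPotentialDecayAux

local notation "E2" => EuclideanSpace ℝ (Fin 2)

lemma vol_ball_le (x : E2) (r : ℝ) : volume (ball x r) ≤ ENNReal.ofReal (π * r^2) := by
  rw [EuclideanSpace.volume_ball]
  rcases le_total r 0 with h | h
  · rw [ENNReal.ofReal_eq_zero.2 h]
    simp
  · rw [Fintype.card_fin]
    rw [show Real.Gamma ((2:ℕ) / 2 + 1) = 1 by norm_num [Real.Gamma_two]]
    rw [← ENNReal.ofReal_pow h, ← ENNReal.ofReal_mul (by positivity)]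
    apply ENNReal.ofReal_le_ofReal
    rw [Real.sq_sqrt pi_nonneg]
    ring_nf
    exact le_rfl

lemma exists_dyadic {t : ℝ} (ht : 1 ≤ t) : ∃ k : ℕ, (2:ℝ)^k ≤ t ∧ t < 2^(k+1) := by
  have ht0 : 0 < t := lt_of_lt_of_le one_pos ht
  refine ⟨⌊Real.logb 2 t⌋₊, ?_, ?_⟩
  · have h1 : ((⌊Real.logb 2 t⌋₊ : ℝ)) ≤ Real.logb 2 t :=
      Nat.floor_le (Real.logb_nonneg one_lt_two ht)
    calc (2:ℝ)^(⌊Real.logb 2 t⌋₊) = (2:ℝ)^((⌊Real.logb 2 t⌋₊ : ℝ)) := by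
          rw [Real.rpow_natCast]
      _ ≤ (2:ℝ)^(Real.logb 2 t) := Real.rpow_le_rpow_of_exponent_le one_le_two h1
      _ = t := Real.rpow_logb two_pos (by norm_num) ht0
  · have h2 : Real.logb 2 t < (⌊Real.logb 2 t⌋₊ : ℝ) + 1 := Nat.lt_floor_add_one _
    calc t = (2:ℝ)^(Real.logb 2 t) := (Real.rpow_logb two_pos (by norm_num) ht0).symm
      _ < (2:ℝ)^(((⌊Real.logb 2 t⌋₊ : ℝ)) + 1) := Real.rpow_lt_rpow_of_exponent_lt one_lt_two h2
      _ = (2:ℝ)^(⌊Real.logb 2 t⌋₊ + 1) := by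
          rw [← Real.rpow_natCast 2 (⌊Real.logb 2 t⌋₊ + 1)]; push_cast; ring_nf

lemma coord_le_norm (w : E2) (i : Fin 2) : |w i| ≤ ‖w‖ := by
  rw [EuclideanSpace.norm_eq]
  rw [← Real.sqrt_sq_eq_abs]
  apply Real.sqrt_le_sqrt
  have : (w i)^2 ≤ ∑ j, ‖w j‖^2 := by
    have := Finset.single_le_sum (f := fun j => ‖w j‖^2) (fun j _ => by positivity)
      (Finset.mem_univ i)
    simpa [Real.norm_eq_abs, sq_abs] using this
  simpa using this

lemma kernel_le (w : E2) (i : Fin 2) : |w i / ‖w‖^2| ≤ ‖w‖⁻¹ := by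
  rcases eq_or_ne w 0 with rfl | hw
  · simp
  · have hn : 0 < ‖w‖ := norm_pos_iff.2 hw
    rw [abs_div, abs_of_nonneg (by positivity : (0:ℝ) ≤ ‖w‖^2)]
    rw [div_le_iff₀ (by positivity)]
    calc |w i| ≤ ‖w‖ := coord_le_norm w i
      _ = ‖w‖⁻¹ * ‖w‖^2 := by field_simp

lemma kernel_diff_le (x u : E2) (i : Fin 2) (hx : 0 < ‖x‖) (hu : ‖u‖ ≤ ‖x‖ / 2) :
    |(x - u) i / ‖x - u‖^2 - x i / ‖x‖^2| ≤ 14 * ‖u‖ / ‖x‖^2 := by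
  set r := ‖x‖ with hr
  have ha : ‖x‖ / 2 ≤ ‖x - u‖ := by
    have := norm_sub_norm_le x u
    have h2 := norm_sub_rev x u
    calc ‖x‖ / 2 = ‖x‖ - ‖x‖/2 := by ring
      _ ≤ ‖x‖ - ‖u‖ := by linarith
      _ ≤ ‖x - u‖ := norm_sub_norm_le x u
  have ha0 : 0 < ‖x - u‖ := lt_of_lt_of_le (by linarith) ha
  have hp : (0:ℝ) < ‖x - u‖^2 := by positivity
  have hq : (0:ℝ) < r^2 := by positivity
  have hsub : ∀ j, (x - u) j = x j - u j := fun j => rfl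
  have hexp : ‖x - u‖^2 = r^2 - 2 * (inner ℝ x u) + ‖u‖^2 := norm_sub_sq_real x u
  have key : (x - u) i / ‖x - u‖^2 - x i / ‖x‖^2
      = (-(u i) * r^2 + x i * (2 * (inner ℝ x u) - ‖u‖^2)) / (‖x - u‖^2 * r^2) := by
    rw [hsub i]
    field_simp
    rw [hexp]
    have hinner : (inner ℝ x u) = x 0 * u 0 + x 1 * u 1 := by
      simp [PiLp.inner_apply, RCLike.inner_apply, Fin.sum_univ_two]; ring
    rw [hinner, ← hr]; field_simp; ring
  rw [key, abs_div, abs_of_pos (by positivity : (0:ℝ) < ‖x-u‖^2 * r^2)]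
  have hnum : |(-(u i) * r^2 + x i * (2 * (inner ℝ x u) - ‖u‖^2))| ≤ 7/2 * ‖u‖ * r^2 := by
    have h1 : |(-(u i)) * r^2| ≤ ‖u‖ * r^2 := by
      rw [abs_mul, abs_neg, abs_of_pos hq]
      exact mul_le_mul_of_nonneg_right (coord_le_norm u i) hq.le
    have h2 : |x i * (2 * (inner ℝ x u) - ‖u‖^2)| ≤ r * (2 * (r * ‖u‖) + ‖u‖ * (r/2)) := by
      rw [abs_mul]
      apply mul_le_mul (le_trans (coord_le_norm x i) le_rfl)
      · calc |2 * (inner ℝ x u) - ‖u‖^2| ≤ 2 * |(inner ℝ x u)| + ‖u‖^2 := by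
              have := abs_sub (2 * (inner ℝ x u)) (‖u‖^2)
              calc |2 * (inner ℝ x u) - ‖u‖^2| ≤ |2 * (inner ℝ x u)| + |‖u‖^2| := abs_sub _ _
                _ = 2 * |(inner ℝ x u)| + ‖u‖^2 := by rw [abs_mul, abs_of_nonneg (by positivity : (0:ℝ) ≤ ‖u‖^2)]; norm_num
          _ ≤ 2 * (r * ‖u‖) + ‖u‖ * (r/2) := by
              have hi := abs_real_inner_le_norm x u
              have hu2 : ‖u‖^2 ≤ ‖u‖ * (r/2) := by
                rw [sq]
                exact mul_le_mul_of_nonneg_left hu (norm_nonneg u)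
              linarith
      · positivity
      · exact hx.le
    calc |(-(u i)) * r^2 + x i * (2 * (inner ℝ x u) - ‖u‖^2)|
        ≤ |(-(u i)) * r^2| + |x i * (2 * (inner ℝ x u) - ‖u‖^2)| := abs_add_le _ _
      _ ≤ ‖u‖ * r^2 + r * (2 * (r * ‖u‖) + ‖u‖ * (r/2)) := add_le_add h1 h2
      _ = 7/2 * ‖u‖ * r^2 := by ring
  have hden : (r/2)^2 * r^2 ≤ ‖x - u‖^2 * r^2 := by
    apply mul_le_mul_of_nonneg_right _ hq.le
    exact pow_le_pow_left₀ (by linarith) ha 2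
  calc |(-(u i) * r^2 + x i * (2 * (inner ℝ x u) - ‖u‖^2))| / (‖x - u‖^2 * r^2)
      ≤ (7/2 * ‖u‖ * r^2) / ((r/2)^2 * r^2) :=
        div_le_div₀ (by positivity) hnum (by positivity) hden
    _ = 14 * ‖u‖ / r^2 := by field_simp; ring

lemma tail_lintegral {d S : ℝ} (hd : 0 < d) (hS : 0 < S) :
    ∫⁻ u in (ball (0:E2) S)ᶜ, ENNReal.ofReal (‖u‖ ^ (-(2+d)))
      ≤ ENNReal.ofReal ((4*π/(1 - (2:ℝ)^(-d))) * S ^ (-d)) := by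
  have hq0 : (0:ℝ) ≤ (2:ℝ)^(-d) := Real.rpow_nonneg (by norm_num) _
  have hq1 : (2:ℝ)^(-d) < 1 :=
    Real.rpow_lt_one_of_one_lt_of_neg one_lt_two (by linarith)
  set A : ℕ → Set E2 := fun k => ball 0 (S*2^(k+1)) \ ball 0 (S*2^k) with hA
  have hcover : (ball (0:E2) S)ᶜ ⊆ ⋃ k, A k := by
    intro u hu
    simp only [Set.mem_compl_iff, mem_ball, dist_zero_right, not_lt] at hu
    have ht : 1 ≤ ‖u‖ / S := (one_le_div hS).2 hu
    obtain ⟨k, h1, h2⟩ := exists_dyadic ht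
    refine Set.mem_iUnion.2 ⟨k, ?_, ?_⟩
    · simp only [mem_ball, dist_zero_right]
      calc ‖u‖ = S * (‖u‖ / S) := by field_simp
        _ < S * 2^(k+1) := by apply mul_lt_mul_of_pos_left h2 hS
    · simp only [mem_ball, dist_zero_right, not_lt]
      calc S * 2^k ≤ S * (‖u‖/S) := mul_le_mul_of_nonneg_left h1 hS.le
        _ = ‖u‖ := by field_simp
  have hbound : ∀ k : ℕ, ∫⁻ u in A k, ENNReal.ofReal (‖u‖ ^ (-(2+d)))
      ≤ ENNReal.ofReal ((4*π*S^(-d)) * ((2:ℝ)^(-d))^k) := by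
    intro k
    set P : ℝ := (2:ℝ)^k with hPdef
    have hP : (0:ℝ) < P := by positivity
    have hk0 : (0:ℝ) < S * P := by positivity
    have hptw : ∀ u ∈ A k, ENNReal.ofReal (‖u‖ ^ (-(2+d)))
        ≤ ENNReal.ofReal ((S*P) ^ (-(2+d))) := by
      intro u hu
      apply ENNReal.ofReal_le_ofReal
      apply Real.rpow_le_rpow_of_nonpos hk0 _ (by linarith)
      simpa only [mem_ball, dist_zero_right, not_lt] using hu.2
    have halg : (S*P) ^ (-(2+d)) * (π * (S*(2*P))^2)
        = (4*π*S^(-d)) * ((2:ℝ)^(-d))^k := by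
      have hS2 : S ^ (-(2+d)) * S^(2:ℕ) = S^(-d) := by
        rw [← Real.rpow_natCast S 2, ← Real.rpow_add hS]; norm_num
      have h1 : (S*P)^(-(2+d)) = S^(-(2+d)) * P^(-(2+d)) := Real.mul_rpow hS.le hP.le
      have h2 : P^(-(2+d)) = ((2:ℝ)^(-d))^k * ((P:ℝ)^(2:ℕ))⁻¹ := by
        rw [show (-(2+d)) = -d + (-2:ℝ) by ring, Real.rpow_add hP]
        congr 1
        · rw [hPdef, ← Real.rpow_natCast ((2:ℝ)^(-d)) k, ← Real.rpow_natCast (2:ℝ) k,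
            ← Real.rpow_mul (by norm_num), ← Real.rpow_mul (by norm_num), mul_comm]
        · rw [Real.rpow_neg hP.le, ← Real.rpow_natCast P 2]
          norm_num
      rw [h1, h2, ← hS2]
      have hPne : ((P:ℝ)^(2:ℕ)) ≠ 0 := by positivity
      field_simp
      ring
    calc ∫⁻ u in A k, ENNReal.ofReal (‖u‖ ^ (-(2+d)))
        ≤ ∫⁻ _ in A k, ENNReal.ofReal ((S*P) ^ (-(2+d))) :=
          setLIntegral_mono' (measurableSet_ball.diff measurableSet_ball) hptw
      _ = ENNReal.ofReal ((S*P) ^ (-(2+d))) * volume (A k) := setLIntegral_const _ _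
      _ ≤ ENNReal.ofReal ((S*P) ^ (-(2+d))) * ENNReal.ofReal (π * (S*(2*P))^2) := by
            apply mul_le_mul_right
            refine le_trans (measure_mono Set.diff_subset) (le_trans (vol_ball_le _ _) ?_)
            apply ENNReal.ofReal_le_ofReal
            have : S * 2^(k+1) = S * (2*P) := by rw [hPdef]; ring
            rw [this]
      _ = ENNReal.ofReal ((S*P) ^ (-(2+d)) * (π * (S*(2*P))^2)) := by
            rw [← ENNReal.ofReal_mul (Real.rpow_nonneg hk0.le _)]
      _ = ENNReal.ofReal ((4*π*S^(-d)) * ((2:ℝ)^(-d))^k) := by rw [halg]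
  calc ∫⁻ u in (ball (0:E2) S)ᶜ, ENNReal.ofReal (‖u‖ ^ (-(2+d)))
      ≤ ∫⁻ u in ⋃ k, A k, ENNReal.ofReal (‖u‖ ^ (-(2+d))) := lintegral_mono_set hcover
    _ ≤ ∑' k, ∫⁻ u in A k, ENNReal.ofReal (‖u‖ ^ (-(2+d))) := lintegral_iUnion_le _ _
    _ ≤ ∑' k, ENNReal.ofReal ((4*π*S^(-d)) * ((2:ℝ)^(-d))^k) := ENNReal.tsum_le_tsum hbound
    _ = ENNReal.ofReal (4*π*S^(-d)) * ∑' k, (ENNReal.ofReal ((2:ℝ)^(-d)))^k := by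
        have hh : ∀ k:ℕ, ENNReal.ofReal ((4*π*S^(-d)) * ((2:ℝ)^(-d))^k)
            = ENNReal.ofReal (4*π*S^(-d)) * (ENNReal.ofReal ((2:ℝ)^(-d)))^k := fun k => by
          rw [ENNReal.ofReal_mul (by positivity), ENNReal.ofReal_pow hq0]
        rw [tsum_congr hh, ENNReal.tsum_mul_left]
    _ = ENNReal.ofReal (4*π*S^(-d)) * (1 - ENNReal.ofReal ((2:ℝ)^(-d)))⁻¹ := by
        rw [ENNReal.tsum_geometric]
    _ = ENNReal.ofReal ((4*π/(1 - (2:ℝ)^(-d))) * S ^ (-d)) := by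
        rw [show (1 : ℝ≥0∞) - ENNReal.ofReal ((2:ℝ)^(-d))
            = ENNReal.ofReal (1 - (2:ℝ)^(-d)) by
          rw [ENNReal.ofReal_sub _ hq0, ENNReal.ofReal_one]]
        rw [← ENNReal.ofReal_inv_of_pos (by linarith)]
        rw [← ENNReal.ofReal_mul (by positivity)]
        congr 1
        field_simp

lemma ball_inv_lintegral (c : E2) {ρ : ℝ} (hρ : 0 < ρ) :
    ∫⁻ u in ball c ρ, ENNReal.ofReal (‖u - c‖⁻¹) ≤ ENNReal.ofReal (4 * π * ρ) := by
  set A : ℕ → Set E2 := fun k => closedBall c (ρ/2^k) \ closedBall c (ρ/2^(k+1)) with hA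
  have hcover : ball c ρ ⊆ {c} ∪ ⋃ k, A k := by
    intro u hu
    rcases eq_or_ne u c with rfl | hne
    · exact Set.mem_union_left _ rfl
    · have hd0 : 0 < ‖u - c‖ := by
        rw [norm_pos_iff, sub_ne_zero]; exact hne
      have hdρ : ‖u - c‖ < ρ := by
        simpa [dist_eq_norm] using hu
      have ht : 1 ≤ ρ / ‖u - c‖ := le_of_lt ((one_lt_div hd0).2 hdρ)
      obtain ⟨k, h1, h2⟩ := exists_dyadic ht
      refine Set.mem_union_right _ (Set.mem_iUnion.2 ⟨k, ?_, ?_⟩)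
      · simp only [mem_closedBall, dist_eq_norm]
        rw [le_div_iff₀ (by positivity)]
        have h1' := (le_div_iff₀ hd0).1 h1
        linarith
      · simp only [mem_closedBall, dist_eq_norm, not_le]
        rw [div_lt_iff₀ (by positivity)]
        have h2' := (div_lt_iff₀ hd0).1 h2
        linarith
  have hbound : ∀ k : ℕ, ∫⁻ u in A k, ENNReal.ofReal (‖u - c‖⁻¹)
      ≤ ENNReal.ofReal ((2*π*ρ) * (1/2:ℝ)^k) := by
    intro k
    have h2k : (0:ℝ) < (2:ℝ)^k := by positivity
    have hptw : ∀ u ∈ A k, ENNReal.ofReal (‖u - c‖⁻¹)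
        ≤ ENNReal.ofReal (2^(k+1)/ρ) := by
      intro u hu
      apply ENNReal.ofReal_le_ofReal
      have h1 : ρ/2^(k+1) ≤ ‖u - c‖ := by
        have := hu.2
        simp only [mem_closedBall, dist_eq_norm, not_le] at this
        exact this.le
      have hd0 : 0 < ‖u - c‖ := lt_of_lt_of_le (by positivity) h1
      rw [inv_eq_one_div, div_le_div_iff₀ hd0 hρ]
      have h1' := (div_le_iff₀ (show (0:ℝ) < 2^(k+1) by positivity)).1 h1
      linarith
  -- integrate
    calc ∫⁻ u in A k, ENNReal.ofReal (‖u - c‖⁻¹)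
        ≤ ∫⁻ _ in A k, ENNReal.ofReal (2^(k+1)/ρ) :=
          setLIntegral_mono' (measurableSet_closedBall.diff measurableSet_closedBall) hptw
      _ = ENNReal.ofReal (2^(k+1)/ρ) * volume (A k) := setLIntegral_const _ _
      _ ≤ ENNReal.ofReal (2^(k+1)/ρ) * ENNReal.ofReal (π * (ρ/2^k)^2) := by
          apply mul_le_mul_right
          refine le_trans (measure_mono Set.diff_subset) ?_
          rw [Measure.addHaar_closedBall_eq_addHaar_ball]
          exact vol_ball_le _ _
      _ = ENNReal.ofReal (2^(k+1)/ρ * (π * (ρ/2^k)^2)) := by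
          rw [← ENNReal.ofReal_mul (by positivity)]
      _ = ENNReal.ofReal ((2*π*ρ) * (1/2:ℝ)^k) := by
          congr 1
          have : ((2:ℝ)^(k+1)) = 2 * 2^k := by ring
          rw [this]
          field_simp
          ring
          rw [← mul_pow]; norm_num
  calc ∫⁻ u in ball c ρ, ENNReal.ofReal (‖u - c‖⁻¹)
      ≤ ∫⁻ u in {c} ∪ ⋃ k, A k, ENNReal.ofReal (‖u - c‖⁻¹) := lintegral_mono_set hcover
    _ ≤ (∫⁻ u in {c}, ENNReal.ofReal (‖u - c‖⁻¹))
        + ∫⁻ u in ⋃ k, A k, ENNReal.ofReal (‖u - c‖⁻¹) := lintegral_union_le _ _ _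
    _ ≤ 0 + ∑' k, ∫⁻ u in A k, ENNReal.ofReal (‖u - c‖⁻¹) := by
        apply add_le_add
        · exact le_of_eq (setLIntegral_measure_zero _ _ (measure_singleton c))
        · exact lintegral_iUnion_le _ _
    _ ≤ ∑' k, ENNReal.ofReal ((2*π*ρ) * (1/2:ℝ)^k) := by
        rw [zero_add]; exact ENNReal.tsum_le_tsum hbound
    _ ≤ ENNReal.ofReal (4 * π * ρ) := by
        have hh : ∀ k:ℕ, ENNReal.ofReal ((2*π*ρ) * (1/2:ℝ)^k)
            = ENNReal.ofReal (2*π*ρ) * (ENNReal.ofReal (1/2:ℝ))^k := fun k => by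
          rw [ENNReal.ofReal_mul (by positivity), ENNReal.ofReal_pow (by norm_num)]
        rw [tsum_congr hh, ENNReal.tsum_mul_left, ENNReal.tsum_geometric]
        have h12 : (1:ℝ≥0∞) - ENNReal.ofReal (1/2:ℝ) = ENNReal.ofReal (1/2:ℝ) := by
          rw [show (1:ℝ≥0∞) = ENNReal.ofReal 1 from ENNReal.ofReal_one.symm,
            ← ENNReal.ofReal_sub _ (by norm_num)]
          norm_num
        rw [h12, ← ENNReal.ofReal_inv_of_pos (by norm_num),
          ← ENNReal.ofReal_mul (by positivity)]
        apply ENNReal.ofReal_le_ofReal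
        rw [show ((1:ℝ)/2)⁻¹ = 2 by norm_num]
        nlinarith [pi_pos, hρ]

lemma kernel_meas (i : Fin 2) : Measurable (fun w : E2 => w i / ‖w‖^2) := by
  have h1 : Measurable (fun w : E2 => w i) := by
    exact (EuclideanSpace.proj i).continuous.measurable
  have h2 : Measurable (fun w : E2 => ‖w‖^2) := (continuous_norm.pow 2).measurable
  exact h1.div h2

end GradPotentialDecayAux

open GradPotentialDecayAux

set_option maxHeartbeats 2000000 in
/-- For an integrable zero-flux field with powerlike decay of order `2+δ`, the gradient of
the logarithmic potential decays as `O(|x|^{−1−μ})` for some `μ > 0`. -/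
theorem grad_potential_decay
    (B : EuclideanSpace ℝ (Fin 2) → ℝ) (C δ R₀ : ℝ)
    (hC : 0 < C) (hδ : 0 < δ) (hR₀ : 0 < R₀)
    (hmeas : Measurable B)
    (hint : Integrable B volume)
    (hzero : ∫ y, B y = 0)
    (hdecay : ∀ x, R₀ ≤ ‖x‖ → |B x| ≤ C * ‖x‖ ^ (-(2 + δ))) :
    ∃ μ > (0 : ℝ), ∃ C' > (0 : ℝ), ∃ R > (0 : ℝ), ∀ i : Fin 2,
      ∀ x : EuclideanSpace ℝ (Fin 2), R ≤ ‖x‖ →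
        |(1 / (2 * π)) * ∫ z, B (x - z) * (z i / ‖z‖ ^ 2)|
          ≤ C' * ‖x‖ ^ (-(1 + μ)) := by
  have hπ : (0:ℝ) < π := pi_pos
  set M : ℝ := ∫ u, |B u| with hMdef
  have hM0 : 0 ≤ M := integral_nonneg fun u => abs_nonneg _
  have hq0 : (0:ℝ) ≤ (2:ℝ)^(-δ) := Real.rpow_nonneg (by norm_num) _
  have hq1 : (2:ℝ)^(-δ) < 1 := Real.rpow_lt_one_of_one_lt_of_neg one_lt_two (by linarith)
  set Kd : ℝ := 4*π/(1 - (2:ℝ)^(-δ)) with hKddef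
  have hKd0 : 0 < Kd := div_pos (by positivity) (by linarith)
  have h2δ : (0:ℝ) < (2:ℝ)^δ := Real.rpow_pos_of_pos two_pos δ
  have h22δ : (0:ℝ) < (2:ℝ)^((2:ℝ)+δ) := Real.rpow_pos_of_pos two_pos _
  set ν : ℝ := min δ 1 / 2 with hνdef
  have hν0 : 0 < ν := div_pos (lt_min hδ one_pos) two_pos
  have hνhalf : ν ≤ 1/2 := by
    have := min_le_right δ 1; rw [hνdef]; linarith
  have hνd2 : ν ≤ δ/2 := by
    have := min_le_left δ 1; rw [hνdef]; linarith
  have hνd : ν ≤ δ := by linarith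
  set Ct : ℝ := 14*M + 7*C*Kd + π*C*2^((2:ℝ)+δ) + 4*C*Kd*2^δ + C*Kd*2^δ with hCtdef
  have hCt0 : 0 ≤ Ct := by
    have h1 : 0 < C*Kd := mul_pos hC hKd0
    have h2 : 0 < π*C*2^((2:ℝ)+δ) := by positivity
    have h3 : 0 < C*Kd*2^δ := mul_pos h1 h2δ
    rw [hCtdef]; linarith
  refine ⟨ν, hν0, Ct/(2*π) + 1, by positivity, R₀^2 + R₀ + 4, by positivity, ?_⟩
  intro i x hR
  set r : ℝ := ‖x‖ with hrdef
  have hr4 : (4:ℝ) ≤ r := by linarith [sq_nonneg R₀]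
  have hr0 : (0:ℝ) < r := by linarith
  have hr1 : (1:ℝ) ≤ r := by linarith
  have hsq0 : 0 < Real.sqrt r := Real.sqrt_pos.2 hr0
  have hsqr : Real.sqrt r * Real.sqrt r = r := Real.mul_self_sqrt hr0.le
  have hsq2 : 2 ≤ Real.sqrt r := by nlinarith [Real.sqrt_nonneg r]
  have hsqhalf : Real.sqrt r ≤ r/2 := by nlinarith
  have hsqR₀ : R₀ ≤ Real.sqrt r := by
    have h1 : R₀^2 ≤ r := by linarith
    calc R₀ = Real.sqrt (R₀^2) := (Real.sqrt_sq hR₀.le).symm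
      _ ≤ Real.sqrt r := Real.sqrt_le_sqrt h1
  have hhalfR₀ : R₀ ≤ r/2 := hsqR₀.trans hsqhalf
  have hmono : ∀ a b : ℝ, a ≤ b → r^a ≤ r^b := fun a b h =>
    Real.rpow_le_rpow_of_exponent_le hr1 h
  have hrν : (0:ℝ) ≤ r^(-(1+ν)) := Real.rpow_nonneg hr0.le _
  -- kernel
  set K : EuclideanSpace ℝ (Fin 2) → ℝ := fun w => w i / ‖w‖^2 with hKdef
  have habsK : ∀ w, |K w| ≤ ‖w‖⁻¹ := fun w => kernel_le w i
  -- decay estimates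
  have hBdec : ∀ u : EuclideanSpace ℝ (Fin 2), R₀ ≤ ‖u‖ → |B u| ≤ C * ‖u‖^(-(2+δ)) := hdecay
  have hBmono : ∀ (S : ℝ) (u : EuclideanSpace ℝ (Fin 2)), R₀ ≤ S → S ≤ ‖u‖ →
      |B u| ≤ C * S^(-(2+δ)) := by
    intro S u hS hSu
    refine (hBdec u (hS.trans hSu)).trans ?_
    have h := Real.rpow_le_rpow_of_nonpos (lt_of_lt_of_le hR₀ hS) hSu (by linarith : -(2+δ) ≤ 0)
    exact mul_le_mul_of_nonneg_left h hC.le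
  -- change of variables
  have hchg : (∫ z, B (x - z) * (z i / ‖z‖ ^ 2)) = ∫ u, B u * K (x - u) := by
    have h := integral_sub_left_eq_self (fun z => B (x - z) * (z i / ‖z‖ ^ 2)) volume x
    simp only [_root_.sub_sub_cancel] at h
    exact h.symm
  have hmeasf : Measurable fun u : EuclideanSpace ℝ (Fin 2) => B u * K (x - u) :=
    hmeas.mul ((kernel_meas i).comp (measurable_const.sub measurable_id))
  -- integrability of u ↦ B u * K (x - u)
  have hMfin : (∫⁻ u, ENNReal.ofReal |B u|) = ENNReal.ofReal M := by
    rw [hMdef]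
    exact (ofReal_integral_eq_lintegral_ofReal hint.abs
      (Filter.Eventually.of_forall fun u => abs_nonneg _)).symm
  have hint' : Integrable (fun u : EuclideanSpace ℝ (Fin 2) => B u * K (x - u)) := by
    refine ⟨hmeasf.aestronglyMeasurable, ?_⟩
    rw [hasFiniteIntegral_iff_norm]
    have hb1 : ∀ u ∈ ball x 1, ENNReal.ofReal ‖B u * K (x - u)‖
        ≤ ENNReal.ofReal ((C * R₀^(-(2+δ))) * ‖u - x‖⁻¹) := by
      intro u hu
      apply ENNReal.ofReal_le_ofReal
      rw [norm_mul, Real.norm_eq_abs, Real.norm_eq_abs]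
      have hxu : ‖x - u‖ < 1 := by
        rw [mem_ball, dist_comm, dist_eq_norm] at hu; exact hu
      have hBu : |B u| ≤ C * R₀^(-(2+δ)) := by
        apply hBmono R₀ u le_rfl
        have h := norm_sub_norm_le x (x - u)
        rw [_root_.sub_sub_cancel] at h
        linarith
      have hKu : |K (x - u)| ≤ ‖u - x‖⁻¹ := by
        rw [norm_sub_rev u x]; exact habsK _
      exact mul_le_mul hBu hKu (abs_nonneg _) (by positivity)
    have hb2 : ∀ u ∈ (ball x 1)ᶜ, ENNReal.ofReal ‖B u * K (x - u)‖
        ≤ ENNReal.ofReal |B u| := by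
      intro u hu
      apply ENNReal.ofReal_le_ofReal
      rw [norm_mul, Real.norm_eq_abs, Real.norm_eq_abs]
      have hxu : (1:ℝ) ≤ ‖x - u‖ := by
        simp only [Set.mem_compl_iff, mem_ball, dist_comm, dist_eq_norm, not_lt] at hu
        exact hu
      have : |K (x - u)| ≤ 1 := by
        refine (habsK _).trans ?_
        rw [inv_le_one_iff₀]; right; exact hxu
      calc |B u| * |K (x-u)| ≤ |B u| * 1 := by
            exact mul_le_mul_of_nonneg_left this (abs_nonneg _)
        _ = |B u| := mul_one _
    calc (∫⁻ u, ENNReal.ofReal ‖B u * K (x - u)‖)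
        = (∫⁻ u in ball x 1, ENNReal.ofReal ‖B u * K (x - u)‖)
          + ∫⁻ u in (ball x 1)ᶜ, ENNReal.ofReal ‖B u * K (x - u)‖ :=
          (lintegral_add_compl _ measurableSet_ball).symm
      _ ≤ ENNReal.ofReal (C * R₀^(-(2+δ))) * ENNReal.ofReal (4*π*1)
          + ENNReal.ofReal M := by
          apply add_le_add
          · calc (∫⁻ u in ball x 1, ENNReal.ofReal ‖B u * K (x - u)‖)
                ≤ ∫⁻ u in ball x 1, ENNReal.ofReal ((C * R₀^(-(2+δ))) * ‖u - x‖⁻¹) :=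
                  setLIntegral_mono' measurableSet_ball hb1
              _ = ENNReal.ofReal (C * R₀^(-(2+δ)))
                    * ∫⁻ u in ball x 1, ENNReal.ofReal ‖u - x‖⁻¹ := by
                  simp_rw [ENNReal.ofReal_mul (by positivity : (0:ℝ) ≤ C * R₀^(-(2+δ)))]
                  exact lintegral_const_mul' _ _ ENNReal.ofReal_ne_top
              _ ≤ ENNReal.ofReal (C * R₀^(-(2+δ))) * ENNReal.ofReal (4*π*1) :=
                  mul_le_mul_right (ball_inv_lintegral x one_pos) _
          · calc (∫⁻ u in (ball x 1)ᶜ, ENNReal.ofReal ‖B u * K (x - u)‖)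
                ≤ ∫⁻ u in (ball x 1)ᶜ, ENNReal.ofReal |B u| :=
                  setLIntegral_mono' measurableSet_ball.compl hb2
              _ ≤ ∫⁻ u, ENNReal.ofReal |B u| := lintegral_mono_set (Set.subset_univ _) |>.trans
                  (le_of_eq (by rw [Measure.restrict_univ]))
              _ = ENNReal.ofReal M := hMfin
      _ < ⊤ := by
          apply ENNReal.add_lt_top.2
          exact ⟨ENNReal.mul_lt_top ENNReal.ofReal_lt_top ENNReal.ofReal_lt_top,
            ENNReal.ofReal_lt_top⟩
  have hintK : Integrable (fun u : EuclideanSpace ℝ (Fin 2) => B u * K x) := hint.mul_const _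
  have hzero' : (∫ u, B u * K x) = 0 := by
    rw [integral_mul_const, hzero, zero_mul]
  have hsplit : (∫ u, B u * K (x - u)) = ∫ u, B u * (K (x-u) - K x) := by
    have h := integral_sub hint' hintK
    rw [hzero', sub_zero] at h
    rw [← h]
    congr 1
    funext u
    ring
  rw [hchg, hsplit]
  set g : EuclideanSpace ℝ (Fin 2) → ℝ := fun u => B u * (K (x-u) - K x) with hgdef
  -- pointwise difference bound
  have hdiff : ∀ u : EuclideanSpace ℝ (Fin 2), ‖u‖ ≤ r/2 →
      |K (x - u) - K x| ≤ 14 * ‖u‖ / r^2 := fun u hu => kernel_diff_le x u i hr0 hu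
  -- the three regions
  set s1 : Set (EuclideanSpace ℝ (Fin 2)) := closedBall 0 (Real.sqrt r) with hs1
  set s2 : Set (EuclideanSpace ℝ (Fin 2)) :=
    closedBall 0 (r/2) \ closedBall 0 (Real.sqrt r) with hs2
  set s3 : Set (EuclideanSpace ℝ (Fin 2)) := (closedBall 0 (r/2))ᶜ with hs3
  have hcover : (Set.univ : Set (EuclideanSpace ℝ (Fin 2))) ⊆ (s1 ∪ s2) ∪ s3 := by
    intro u _
    by_cases h1 : ‖u‖ ≤ Real.sqrt r
    · exact Or.inl (Or.inl (by simpa [hs1, mem_closedBall, dist_zero_right] using h1))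
    by_cases h2 : ‖u‖ ≤ r/2
    · refine Or.inl (Or.inr ?_)
      rw [hs2, Set.mem_diff]
      constructor
      · simpa [mem_closedBall, dist_zero_right] using h2
      · simpa [mem_closedBall, dist_zero_right] using h1
    · refine Or.inr ?_
      rw [hs3, Set.mem_compl_iff]
      simpa [mem_closedBall, dist_zero_right] using h2
  -- region 1 estimate
  have hp1 : (∫⁻ u in s1, ENNReal.ofReal ‖g u‖) ≤ ENNReal.ofReal (14*M * r^(-(1+ν))) := by
    have hptw : ∀ u ∈ s1, ENNReal.ofReal ‖g u‖
        ≤ ENNReal.ofReal ((14 * Real.sqrt r / r^2) * |B u|) := by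
      intro u hu
      apply ENNReal.ofReal_le_ofReal
      rw [mem_closedBall, dist_zero_right] at hu
      rw [hgdef, Real.norm_eq_abs, abs_mul]
      have h1 : |K (x - u) - K x| ≤ 14 * Real.sqrt r / r^2 := by
        refine (hdiff u (hu.trans hsqhalf)).trans ?_
        gcongr
      calc |B u| * |K (x - u) - K x| ≤ |B u| * (14 * Real.sqrt r / r^2) :=
            mul_le_mul_of_nonneg_left h1 (abs_nonneg _)
        _ = (14 * Real.sqrt r / r^2) * |B u| := mul_comm _ _
    calc (∫⁻ u in s1, ENNReal.ofReal ‖g u‖)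
        ≤ ∫⁻ u in s1, ENNReal.ofReal ((14 * Real.sqrt r / r^2) * |B u|) :=
          setLIntegral_mono' measurableSet_closedBall hptw
      _ ≤ ∫⁻ u, ENNReal.ofReal ((14 * Real.sqrt r / r^2) * |B u|) :=
          (lintegral_mono_set (Set.subset_univ _)).trans
            (le_of_eq (by rw [Measure.restrict_univ]))
      _ = ENNReal.ofReal (14 * Real.sqrt r / r^2) * ∫⁻ u, ENNReal.ofReal |B u| := by
          simp_rw [ENNReal.ofReal_mul (by positivity : (0:ℝ) ≤ 14 * Real.sqrt r / r^2)]
          exact lintegral_const_mul' _ _ ENNReal.ofReal_ne_top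
      _ = ENNReal.ofReal (14 * Real.sqrt r / r^2) * ENNReal.ofReal M := by rw [hMfin]
      _ = ENNReal.ofReal ((14 * Real.sqrt r / r^2) * M) :=
          (ENNReal.ofReal_mul (by positivity)).symm
      _ ≤ ENNReal.ofReal (14*M * r^(-(1+ν))) := by
          apply ENNReal.ofReal_le_ofReal
          have hb : Real.sqrt r / r^2 ≤ r^(-(1+ν)) := by
            have e1 : Real.sqrt r / r^2 = r ^ ((1:ℝ)/2 + (-2)) := by
              rw [Real.rpow_add hr0, ← Real.sqrt_eq_rpow]
              rw [show r ^ ((-2):ℝ) = (r^(2:ℕ))⁻¹ by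
                rw [Real.rpow_neg hr0.le, Real.rpow_two]]
              rw [div_eq_mul_inv]
            rw [e1]
            exact hmono _ _ (by linarith)
          calc 14 * Real.sqrt r / r^2 * M = (Real.sqrt r / r^2) * (14*M) := by ring
            _ ≤ r^(-(1+ν)) * (14*M) := mul_le_mul_of_nonneg_right hb (by linarith)
            _ = 14*M * r^(-(1+ν)) := mul_comm _ _
  -- region 2 estimate
  have hp2 : (∫⁻ u in s2, ENNReal.ofReal ‖g u‖)
      ≤ ENNReal.ofReal (7*C*Kd * r^(-(1+ν))) := by
    have hptw : ∀ u ∈ s2, ENNReal.ofReal ‖g u‖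
        ≤ ENNReal.ofReal ((7*C/r) * ‖u‖^(-(2+δ))) := by
      intro u hu
      apply ENNReal.ofReal_le_ofReal
      rw [hs2, Set.mem_diff, mem_closedBall, mem_closedBall, dist_zero_right] at hu
      obtain ⟨hu1, hu2⟩ := hu
      have hu3 : Real.sqrt r ≤ ‖u‖ := le_of_not_ge (by simpa [dist_zero_right] using hu2)
      have hBu : |B u| ≤ C * ‖u‖^(-(2+δ)) := hBdec u (hsqR₀.trans hu3)
      have hKu : |K (x - u) - K x| ≤ 7 / r := by
        refine (hdiff u hu1).trans ?_
        rw [div_le_div_iff₀ (by positivity) hr0]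
        nlinarith
      rw [hgdef, Real.norm_eq_abs, abs_mul]
      calc |B u| * |K (x - u) - K x| ≤ (C * ‖u‖^(-(2+δ))) * (7/r) :=
            mul_le_mul hBu hKu (abs_nonneg _) (by positivity)
        _ = (7*C/r) * ‖u‖^(-(2+δ)) := by ring
    calc (∫⁻ u in s2, ENNReal.ofReal ‖g u‖)
        ≤ ∫⁻ u in s2, ENNReal.ofReal ((7*C/r) * ‖u‖^(-(2+δ))) :=
          setLIntegral_mono' (measurableSet_closedBall.diff measurableSet_closedBall) hptw
      _ ≤ ∫⁻ u in (ball (0:EuclideanSpace ℝ (Fin 2)) (Real.sqrt r))ᶜ,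
            ENNReal.ofReal ((7*C/r) * ‖u‖^(-(2+δ))) := by
          apply lintegral_mono_set
          intro u hu
          rw [hs2, Set.mem_diff] at hu
          simp only [Set.mem_compl_iff, mem_ball, dist_zero_right, not_lt]
          have := hu.2
          simp only [mem_closedBall, dist_zero_right, not_le] at this
          exact this.le
      _ = ENNReal.ofReal (7*C/r) * ∫⁻ u in (ball (0:EuclideanSpace ℝ (Fin 2)) (Real.sqrt r))ᶜ,
            ENNReal.ofReal (‖u‖^(-(2+δ))) := by
          simp_rw [ENNReal.ofReal_mul (by positivity : (0:ℝ) ≤ 7*C/r)]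
          exact lintegral_const_mul' _ _ ENNReal.ofReal_ne_top
      _ ≤ ENNReal.ofReal (7*C/r) * ENNReal.ofReal (Kd * (Real.sqrt r)^(-δ)) :=
          mul_le_mul_right (by rw [hKddef]; exact tail_lintegral hδ hsq0) _
      _ = ENNReal.ofReal ((7*C/r) * (Kd * (Real.sqrt r)^(-δ))) :=
          (ENNReal.ofReal_mul (by positivity)).symm
      _ ≤ ENNReal.ofReal (7*C*Kd * r^(-(1+ν))) := by
          apply ENNReal.ofReal_le_ofReal
          have hsqrpow : (Real.sqrt r)^(-δ) = r^(-(δ/2)) := by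
            rw [Real.sqrt_eq_rpow, ← Real.rpow_mul hr0.le]
            congr 1
            ring
          have e1 : (7*C/r) * (Kd * (Real.sqrt r)^(-δ))
              = (7*C*Kd) * (r^((-1):ℝ) * r^(-(δ/2))) := by
            rw [hsqrpow, Real.rpow_neg_one]; ring
          rw [e1, ← Real.rpow_add hr0]
          exact mul_le_mul_of_nonneg_left (hmono _ _ (by linarith)) (by positivity)
  -- region 3
  have hs3sub : s3 ⊆ (ball (0:EuclideanSpace ℝ (Fin 2)) (r/2))ᶜ :=
    Set.compl_subset_compl.2 ball_subset_closedBall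
  have hs3norm : ∀ u ∈ s3, r/2 ≤ ‖u‖ := by
    intro u hu
    rw [hs3, Set.mem_compl_iff, mem_closedBall, dist_zero_right, not_le] at hu
    exact hu.le
  have htail3 : (∫⁻ u in (ball (0:EuclideanSpace ℝ (Fin 2)) (r/2))ᶜ,
      ENNReal.ofReal (‖u‖^(-(2+δ)))) ≤ ENNReal.ofReal (Kd * (r/2)^(-δ)) := by
    rw [hKddef]; exact tail_lintegral hδ (by positivity)
  have e3 : ((r/2:ℝ))^(-δ) = r^(-δ) * (2:ℝ)^δ := by
    rw [Real.div_rpow hr0.le (by norm_num : (0:ℝ) ≤ 2), div_eq_mul_inv]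
    congr 1
    rw [← Real.rpow_neg (by norm_num : (0:ℝ) ≤ 2), neg_neg]
  have hb5 : (C*r⁻¹) * (Kd * (r/2)^(-δ)) ≤ C*Kd*2^δ * r^(-(1+ν)) := by
    rw [e3]
    have e5 : r⁻¹ * r^(-δ) = r^((-1:ℝ) + -δ) := by
      rw [Real.rpow_add hr0, Real.rpow_neg_one]
    calc (C*r⁻¹) * (Kd * (r^(-δ) * 2^δ)) = (C*Kd*2^δ) * (r⁻¹ * r^(-δ)) := by ring
      _ = (C*Kd*2^δ) * r^((-1:ℝ) + -δ) := by rw [e5]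
      _ ≤ (C*Kd*2^δ) * r^(-(1+ν)) :=
          mul_le_mul_of_nonneg_left (hmono _ _ (by linarith)) (by positivity)
  have hb4 : (C*(r/4)⁻¹) * (Kd * (r/2)^(-δ)) ≤ 4*C*Kd*2^δ * r^(-(1+ν)) := by
    have e6 : ((r/4:ℝ))⁻¹ = 4 * r⁻¹ := by
      rw [inv_div, div_eq_mul_inv]
    rw [e6]
    calc (C*(4*r⁻¹)) * (Kd * (r/2)^(-δ)) = 4 * ((C*r⁻¹) * (Kd * (r/2)^(-δ))) := by ring
      _ ≤ 4 * (C*Kd*2^δ * r^(-(1+ν))) := by linarith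
      _ = 4*C*Kd*2^δ * r^(-(1+ν)) := by ring
  have hb3 : C*(r/2)^(-(2+δ)) * (4*π*(r/4)) ≤ π*C*2^((2:ℝ)+δ) * r^(-(1+ν)) := by
    have e2 : ((r/2:ℝ))^(-(2+δ)) = r^(-(2+δ)) * (2:ℝ)^((2:ℝ)+δ) := by
      rw [Real.div_rpow hr0.le (by norm_num : (0:ℝ) ≤ 2), div_eq_mul_inv]
      congr 1
      rw [← Real.rpow_neg (by norm_num : (0:ℝ) ≤ 2), neg_neg]
    rw [e2]
    have e7 : r^(-(2+δ)) * r = r^(-(2+δ) + 1) := by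
      rw [Real.rpow_add hr0, Real.rpow_one]
    calc C*(r^(-(2+δ)) * 2^((2:ℝ)+δ)) * (4*π*(r/4))
        = (π*C*2^((2:ℝ)+δ)) * (r^(-(2+δ)) * r) := by ring
      _ = (π*C*2^((2:ℝ)+δ)) * r^(-(2+δ)+1) := by rw [e7]
      _ ≤ (π*C*2^((2:ℝ)+δ)) * r^(-(1+ν)) :=
          mul_le_mul_of_nonneg_left (hmono _ _ (by linarith)) (by positivity)
  have hmeast1 : Measurable fun u : EuclideanSpace ℝ (Fin 2) =>
      ENNReal.ofReal (|B u| * ‖u - x‖⁻¹) :=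
    ENNReal.measurable_ofReal.comp
      (hmeas.abs.mul ((measurable_id.sub measurable_const).norm.inv))
  have hp3 : (∫⁻ u in s3, ENNReal.ofReal ‖g u‖)
      ≤ ENNReal.ofReal (π*C*2^((2:ℝ)+δ) * r^(-(1+ν)))
        + ENNReal.ofReal (4*C*Kd*2^δ * r^(-(1+ν)))
        + ENNReal.ofReal (C*Kd*2^δ * r^(-(1+ν))) := by
    have hptw : ∀ u ∈ s3, ENNReal.ofReal ‖g u‖
        ≤ ENNReal.ofReal (|B u| * ‖u - x‖⁻¹) + ENNReal.ofReal (|B u| * r⁻¹) := by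
      intro u _
      refine le_trans (ENNReal.ofReal_le_ofReal ?_) (ENNReal.ofReal_add_le)
      rw [hgdef, Real.norm_eq_abs, abs_mul]
      have h1 : |K (x - u) - K x| ≤ ‖u - x‖⁻¹ + r⁻¹ := by
        refine (abs_sub _ _).trans (add_le_add ?_ ?_)
        · rw [norm_sub_rev u x]; exact habsK _
        · rw [hrdef]; exact habsK x
      calc |B u| * |K (x - u) - K x| ≤ |B u| * (‖u - x‖⁻¹ + r⁻¹) :=
            mul_le_mul_of_nonneg_left h1 (abs_nonneg _)
        _ = |B u| * ‖u - x‖⁻¹ + |B u| * r⁻¹ := by ring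
    have hsplit3 : (∫⁻ u in s3, ENNReal.ofReal ‖g u‖)
        ≤ (∫⁻ u in s3, ENNReal.ofReal (|B u| * ‖u - x‖⁻¹))
          + ∫⁻ u in s3, ENNReal.ofReal (|B u| * r⁻¹) := by
      calc (∫⁻ u in s3, ENNReal.ofReal ‖g u‖)
          ≤ ∫⁻ u in s3, (ENNReal.ofReal (|B u| * ‖u - x‖⁻¹)
              + ENNReal.ofReal (|B u| * r⁻¹)) :=
            setLIntegral_mono' measurableSet_closedBall.compl hptw
        _ = _ := lintegral_add_left hmeast1 _
    -- second piece (Z)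
    have hZ : (∫⁻ u in s3, ENNReal.ofReal (|B u| * r⁻¹))
        ≤ ENNReal.ofReal (C*Kd*2^δ * r^(-(1+ν))) := by
      have hptwZ : ∀ u ∈ s3, ENNReal.ofReal (|B u| * r⁻¹)
          ≤ ENNReal.ofReal ((C*r⁻¹) * ‖u‖^(-(2+δ))) := by
        intro u hu
        apply ENNReal.ofReal_le_ofReal
        have hBu : |B u| ≤ C * ‖u‖^(-(2+δ)) := hBdec u (hhalfR₀.trans (hs3norm u hu))
        calc |B u| * r⁻¹ ≤ (C * ‖u‖^(-(2+δ))) * r⁻¹ :=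
              mul_le_mul_of_nonneg_right hBu (by positivity)
          _ = (C*r⁻¹) * ‖u‖^(-(2+δ)) := by ring
      calc (∫⁻ u in s3, ENNReal.ofReal (|B u| * r⁻¹))
          ≤ ∫⁻ u in s3, ENNReal.ofReal ((C*r⁻¹) * ‖u‖^(-(2+δ))) :=
            setLIntegral_mono' measurableSet_closedBall.compl hptwZ
        _ ≤ ∫⁻ u in (ball (0:EuclideanSpace ℝ (Fin 2)) (r/2))ᶜ,
              ENNReal.ofReal ((C*r⁻¹) * ‖u‖^(-(2+δ))) := lintegral_mono_set hs3sub
        _ = ENNReal.ofReal (C*r⁻¹) * ∫⁻ u in (ball (0:EuclideanSpace ℝ (Fin 2)) (r/2))ᶜ,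
              ENNReal.ofReal (‖u‖^(-(2+δ))) := by
            simp_rw [ENNReal.ofReal_mul (by positivity : (0:ℝ) ≤ C*r⁻¹)]
            exact lintegral_const_mul' _ _ ENNReal.ofReal_ne_top
        _ ≤ ENNReal.ofReal (C*r⁻¹) * ENNReal.ofReal (Kd * (r/2)^(-δ)) :=
            mul_le_mul_right htail3 _
        _ = ENNReal.ofReal ((C*r⁻¹) * (Kd * (r/2)^(-δ))) :=
            (ENNReal.ofReal_mul (by positivity)).symm
        _ ≤ ENNReal.ofReal (C*Kd*2^δ * r^(-(1+ν))) := ENNReal.ofReal_le_ofReal hb5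
    -- first piece (X + Y)
    have hXY : (∫⁻ u in s3, ENNReal.ofReal (|B u| * ‖u - x‖⁻¹))
        ≤ ENNReal.ofReal (π*C*2^((2:ℝ)+δ) * r^(-(1+ν)))
          + ENNReal.ofReal (4*C*Kd*2^δ * r^(-(1+ν))) := by
      have hcut : (∫⁻ u in s3, ENNReal.ofReal (|B u| * ‖u - x‖⁻¹))
          ≤ (∫⁻ u in s3 ∩ ball x (r/4), ENNReal.ofReal (|B u| * ‖u - x‖⁻¹))
            + ∫⁻ u in s3 \ ball x (r/4), ENNReal.ofReal (|B u| * ‖u - x‖⁻¹) := by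
        refine le_trans (le_of_eq ?_) (lintegral_union_le _ _ _)
        rw [Set.inter_union_diff]
      refine hcut.trans (add_le_add ?_ ?_)
      · -- X : near the singularity
        have hptwX : ∀ u ∈ s3 ∩ ball x (r/4), ENNReal.ofReal (|B u| * ‖u - x‖⁻¹)
            ≤ ENNReal.ofReal ((C*(r/2)^(-(2+δ))) * ‖u - x‖⁻¹) := by
          intro u hu
          apply ENNReal.ofReal_le_ofReal
          have hBu : |B u| ≤ C * (r/2)^(-(2+δ)) :=
            hBmono (r/2) u hhalfR₀ (hs3norm u hu.1)
          exact mul_le_mul_of_nonneg_right hBu (by positivity)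
        calc (∫⁻ u in s3 ∩ ball x (r/4), ENNReal.ofReal (|B u| * ‖u - x‖⁻¹))
            ≤ ∫⁻ u in s3 ∩ ball x (r/4),
                ENNReal.ofReal ((C*(r/2)^(-(2+δ))) * ‖u - x‖⁻¹) :=
              setLIntegral_mono' (measurableSet_closedBall.compl.inter measurableSet_ball) hptwX
          _ ≤ ∫⁻ u in ball x (r/4),
                ENNReal.ofReal ((C*(r/2)^(-(2+δ))) * ‖u - x‖⁻¹) :=
              lintegral_mono_set Set.inter_subset_right
          _ = ENNReal.ofReal (C*(r/2)^(-(2+δ))) * ∫⁻ u in ball x (r/4),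
                ENNReal.ofReal (‖u - x‖⁻¹) := by
              simp_rw [ENNReal.ofReal_mul (by positivity : (0:ℝ) ≤ C*(r/2)^(-(2+δ)))]
              exact lintegral_const_mul' _ _ ENNReal.ofReal_ne_top
          _ ≤ ENNReal.ofReal (C*(r/2)^(-(2+δ))) * ENNReal.ofReal (4*π*(r/4)) :=
              mul_le_mul_right (ball_inv_lintegral x (by positivity)) _
          _ = ENNReal.ofReal (C*(r/2)^(-(2+δ)) * (4*π*(r/4))) :=
              (ENNReal.ofReal_mul (by positivity)).symm
          _ ≤ ENNReal.ofReal (π*C*2^((2:ℝ)+δ) * r^(-(1+ν))) := ENNReal.ofReal_le_ofReal hb3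
      · -- Y : far from the singularity
        have hptwY : ∀ u ∈ s3 \ ball x (r/4), ENNReal.ofReal (|B u| * ‖u - x‖⁻¹)
            ≤ ENNReal.ofReal ((C*(r/4)⁻¹) * ‖u‖^(-(2+δ))) := by
          intro u hu
          apply ENNReal.ofReal_le_ofReal
          have hBu : |B u| ≤ C * ‖u‖^(-(2+δ)) := hBdec u (hhalfR₀.trans (hs3norm u hu.1))
          have hfar : (r/4:ℝ) ≤ ‖u - x‖ := by
            have := hu.2
            simp only [mem_ball, dist_eq_norm, not_lt] at this
            exact this
          have hinv : ‖u - x‖⁻¹ ≤ (r/4:ℝ)⁻¹ :=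
            inv_anti₀ (by positivity) hfar
          calc |B u| * ‖u - x‖⁻¹ ≤ (C * ‖u‖^(-(2+δ))) * (r/4)⁻¹ :=
                mul_le_mul hBu hinv (by positivity) (by positivity)
            _ = (C*(r/4)⁻¹) * ‖u‖^(-(2+δ)) := by ring
        calc (∫⁻ u in s3 \ ball x (r/4), ENNReal.ofReal (|B u| * ‖u - x‖⁻¹))
            ≤ ∫⁻ u in s3 \ ball x (r/4),
                ENNReal.ofReal ((C*(r/4)⁻¹) * ‖u‖^(-(2+δ))) :=
              setLIntegral_mono' (measurableSet_closedBall.compl.diff measurableSet_ball) hptwY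
          _ ≤ ∫⁻ u in (ball (0:EuclideanSpace ℝ (Fin 2)) (r/2))ᶜ,
                ENNReal.ofReal ((C*(r/4)⁻¹) * ‖u‖^(-(2+δ))) :=
              lintegral_mono_set (Set.diff_subset.trans hs3sub)
          _ = ENNReal.ofReal (C*(r/4)⁻¹) * ∫⁻ u in (ball (0:EuclideanSpace ℝ (Fin 2)) (r/2))ᶜ,
                ENNReal.ofReal (‖u‖^(-(2+δ))) := by
              simp_rw [ENNReal.ofReal_mul (by positivity : (0:ℝ) ≤ C*(r/4)⁻¹)]
              exact lintegral_const_mul' _ _ ENNReal.ofReal_ne_top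
          _ ≤ ENNReal.ofReal (C*(r/4)⁻¹) * ENNReal.ofReal (Kd * (r/2)^(-δ)) :=
              mul_le_mul_right htail3 _
          _ = ENNReal.ofReal ((C*(r/4)⁻¹) * (Kd * (r/2)^(-δ))) :=
              (ENNReal.ofReal_mul (by positivity)).symm
          _ ≤ ENNReal.ofReal (4*C*Kd*2^δ * r^(-(1+ν))) := ENNReal.ofReal_le_ofReal hb4
    calc (∫⁻ u in s3, ENNReal.ofReal ‖g u‖)
        ≤ (∫⁻ u in s3, ENNReal.ofReal (|B u| * ‖u - x‖⁻¹))
          + ∫⁻ u in s3, ENNReal.ofReal (|B u| * r⁻¹) := hsplit3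
      _ ≤ (ENNReal.ofReal (π*C*2^((2:ℝ)+δ) * r^(-(1+ν)))
            + ENNReal.ofReal (4*C*Kd*2^δ * r^(-(1+ν))))
          + ENNReal.ofReal (C*Kd*2^δ * r^(-(1+ν))) := add_le_add hXY hZ
  -- total bound
  have hLtotal : (∫⁻ u, ENNReal.ofReal ‖g u‖) ≤ ENNReal.ofReal (Ct * r^(-(1+ν))) := by
    have hnn : ∀ c : ℝ, 0 ≤ c → (0:ℝ) ≤ c * r^(-(1+ν)) := fun c hc => mul_nonneg hc hrν
    calc (∫⁻ u, ENNReal.ofReal ‖g u‖)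
        = ∫⁻ u in Set.univ, ENNReal.ofReal ‖g u‖ := by rw [Measure.restrict_univ]
      _ ≤ ∫⁻ u in (s1 ∪ s2) ∪ s3, ENNReal.ofReal ‖g u‖ := lintegral_mono_set hcover
      _ ≤ (∫⁻ u in s1 ∪ s2, ENNReal.ofReal ‖g u‖)
          + ∫⁻ u in s3, ENNReal.ofReal ‖g u‖ := lintegral_union_le _ _ _
      _ ≤ ((∫⁻ u in s1, ENNReal.ofReal ‖g u‖) + ∫⁻ u in s2, ENNReal.ofReal ‖g u‖)
          + ∫⁻ u in s3, ENNReal.ofReal ‖g u‖ :=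
          add_le_add (lintegral_union_le _ _ _) le_rfl
      _ ≤ (ENNReal.ofReal (14*M * r^(-(1+ν))) + ENNReal.ofReal (7*C*Kd * r^(-(1+ν))))
          + (ENNReal.ofReal (π*C*2^((2:ℝ)+δ) * r^(-(1+ν)))
            + ENNReal.ofReal (4*C*Kd*2^δ * r^(-(1+ν)))
            + ENNReal.ofReal (C*Kd*2^δ * r^(-(1+ν)))) :=
          add_le_add (add_le_add hp1 hp2) hp3
      _ = ENNReal.ofReal (Ct * r^(-(1+ν))) := by
          have n1 : (0:ℝ) ≤ 14*M * r^(-(1+ν)) := hnn _ (by linarith)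
          have n2 : (0:ℝ) ≤ 7*C*Kd * r^(-(1+ν)) := hnn _ (by positivity)
          have n3 : (0:ℝ) ≤ π*C*2^((2:ℝ)+δ) * r^(-(1+ν)) := hnn _ (by positivity)
          have n4 : (0:ℝ) ≤ 4*C*Kd*2^δ * r^(-(1+ν)) := hnn _ (by positivity)
          have n5 : (0:ℝ) ≤ C*Kd*2^δ * r^(-(1+ν)) := hnn _ (by positivity)
          rw [← ENNReal.ofReal_add n1 n2, ← ENNReal.ofReal_add n3 n4,
            ← ENNReal.ofReal_add (by linarith) n5,
            ← ENNReal.ofReal_add (by linarith) (by linarith)]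
          congr 1
          rw [hCtdef]; ring
  have habs : |∫ u, g u| ≤ Ct * r^(-(1+ν)) := by
    have h1 := norm_integral_le_lintegral_norm (μ := volume) g
    rw [Real.norm_eq_abs] at h1
    refine h1.trans ?_
    have h2 := ENNReal.toReal_mono ENNReal.ofReal_ne_top hLtotal
    rwa [ENNReal.toReal_ofReal (mul_nonneg hCt0 hrν)] at h2
  rw [abs_mul, abs_of_pos (by positivity : (0:ℝ) < 1/(2*π))]
  calc 1/(2*π) * |∫ u, g u| ≤ 1/(2*π) * (Ct * r^(-(1+ν))) :=
        mul_le_mul_of_nonneg_left habs (by positivity)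
    _ = (Ct/(2*π)) * r^(-(1+ν)) := by ring
    _ ≤ (Ct/(2*π) + 1) * r^(-(1+ν)) := by
        apply mul_le_mul_of_nonneg_right _ hrν
        linarith
end

section
/- Let φ : ℝ² → ℝ be continuous and satisfy |φ(x) − F ln|x|| < ε ln|x| for |x| > R, where F = N + η with η ∈ (0,1], N ∈ ℕ, and 0 < ε < η. Let χ_j(x) = e^{−φ(x)}(x₁+ix₂)^j. Then for any α ∈ ℂ^{N+1} with |α| = 1 and any ϱ > R: (1/ϱ²)∫_{ϱ ≤ |x| ≤ 2ϱ} |Σ_{j=0}^N α_j χ_j(x)|² dx ≤ (4π/(1+ε+N−F)) (2ϱ)^{2(N−F+ε)}, which tends to 0 as ϱ → ∞. -/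
open MeasureTheory Real Filter


lemma annulus_measurable (s t : ℝ) : MeasurableSet {z : ℂ | s ≤ ‖z‖ ∧ ‖z‖ ≤ t} := by
  have : {z : ℂ | s ≤ ‖z‖ ∧ ‖z‖ ≤ t} = (fun z : ℂ => ‖z‖) ⁻¹' Set.Icc s t := rfl
  rw [this]
  exact measurableSet_Icc.preimage continuous_norm.measurable

lemma annulus_compact (s t : ℝ) : IsCompact {z : ℂ | s ≤ ‖z‖ ∧ ‖z‖ ≤ t} := by
  have hcl : IsClosed {z : ℂ | s ≤ ‖z‖ ∧ ‖z‖ ≤ t} := by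
    have : {z : ℂ | s ≤ ‖z‖ ∧ ‖z‖ ≤ t} = (fun z : ℂ => ‖z‖) ⁻¹' Set.Icc s t := rfl
    rw [this]
    exact isClosed_Icc.preimage continuous_norm
  exact (isCompact_closedBall (0:ℂ) t).of_isClosed_subset hcl
    (fun z hz => by simpa [Metric.mem_closedBall, dist_eq_norm] using hz.2)

lemma cross_term_zero (s t c : ℝ) {j k : ℕ} (hjk : j ≠ k) :
    ∫ z in {z : ℂ | s ≤ ‖z‖ ∧ ‖z‖ ≤ t},
      ((‖z‖ ^ c : ℝ) : ℂ) * (z ^ j * (starRingEnd ℂ) z ^ k) = 0 := by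
  set A := {z : ℂ | s ≤ ‖z‖ ∧ ‖z‖ ≤ t} with hA
  set g : ℂ → ℂ := fun z => ((‖z‖ ^ c : ℝ) : ℂ) * (z ^ j * (starRingEnd ℂ) z ^ k) with hg
  have hjk' : (j : ℝ) - k ≠ 0 := sub_ne_zero.2 (by exact_mod_cast hjk)
  set θ : ℝ := π / ((j : ℝ) - k) with hθ
  set u : Circle := Circle.exp θ with huu
  have key : ((u : ℂ)) ^ j * ((starRingEnd ℂ) (u : ℂ)) ^ k = -1 := by
    have hu : ((u : ℂ)) = Complex.exp (θ * Complex.I) := Circle.coe_exp θ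
    have hconj : (starRingEnd ℂ) (Complex.exp (θ * Complex.I))
        = Complex.exp (-(θ * Complex.I)) := by
      rw [← Complex.exp_conj]
      congr 1
      simp [Complex.conj_ofReal]
    rw [hu, hconj, ← Complex.exp_nat_mul, ← Complex.exp_nat_mul, ← Complex.exp_add]
    have harg : (j : ℂ) * (θ * Complex.I) + (k : ℂ) * -(θ * Complex.I)
        = ((((j : ℝ) - k) * θ : ℝ) : ℂ) * Complex.I := by
      push_cast; ring
    rw [harg]
    have : ((j : ℝ) - k) * θ = π := by
      rw [hθ, mul_div_cancel₀ _ hjk']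
    rw [this, Complex.exp_pi_mul_I]
  have hmp : MeasurePreserving (rotation u) volume volume :=
    (rotation u).measurePreserving
  have hemb : MeasurableEmbedding (rotation u) :=
    (rotation u).toHomeomorph.measurableEmbedding
  have hpre : (rotation u) ⁻¹' A = A := by
    ext z
    simp only [Set.mem_preimage, hA, Set.mem_setOf_eq, (rotation u).norm_map]
  have hsub := hmp.setIntegral_preimage_emb hemb g A
  rw [hpre] at hsub
  have hpt : ∀ z : ℂ, g (rotation u z) = -(g z) := by
    intro z
    have hnorm : ‖(u:ℂ) * z‖ = ‖z‖ := by
      rw [← rotation_apply u z]; exact (rotation u).norm_map z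
    rw [hg]
    simp only [hnorm, rotation_apply, map_mul, mul_pow]
    have : ((u:ℂ))^j * z^j * (((starRingEnd ℂ) (u:ℂ))^k * ((starRingEnd ℂ) z)^k)
        = (((u:ℂ))^j * ((starRingEnd ℂ) (u:ℂ))^k) * (z^j * ((starRingEnd ℂ) z)^k) := by ring
    rw [this, key]
    ring
  have : ∫ z in A, g z = -∫ z in A, g z := by
    conv_rhs => rw [← hsub]
    rw [← integral_neg]
    exact setIntegral_congr_fun (annulus_measurable s t) (fun z _ => (by rw [hpt z]; ring))
  linear_combination this / 2


lemma parseval_bound (n : ℕ) (α : Fin (n + 1) → ℂ) (hα : ∑ j, ‖α j‖ ^ 2 = 1)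
    (c s t : ℝ) (hs : 1 < s) :
    ∫ z in {z : ℂ | s ≤ ‖z‖ ∧ ‖z‖ ≤ t}, ‖z‖ ^ c * ‖∑ j, α j * z ^ (j : ℕ)‖ ^ 2
      ≤ ∫ z in {z : ℂ | s ≤ ‖z‖ ∧ ‖z‖ ≤ t}, ‖z‖ ^ (c + 2 * n) := by
  set A := {z : ℂ | s ≤ ‖z‖ ∧ ‖z‖ ≤ t} with hAdef
  have hA : MeasurableSet A := annulus_measurable s t
  have hcomp : IsCompact A := annulus_compact s t
  have hz0 : ∀ z ∈ A, ‖z‖ ≠ 0 := fun z hz => by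
    have : (1:ℝ) < ‖z‖ := lt_of_lt_of_le hs hz.1
    positivity
  have hz1 : ∀ z ∈ A, (1:ℝ) ≤ ‖z‖ := fun z hz => le_of_lt (lt_of_lt_of_le hs hz.1)
  -- the summand functions
  set F : Fin (n+1) → Fin (n+1) → ℂ → ℂ := fun j k z =>
    ((‖z‖ ^ c : ℝ) : ℂ) * ((α j * (starRingEnd ℂ) (α k)) *
      (z ^ (j : ℕ) * (starRingEnd ℂ) z ^ (k : ℕ))) with hF
  -- continuity of the radial weight
  have hrc : ContinuousOn (fun z : ℂ => (‖z‖ ^ c : ℝ)) A :=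
    ContinuousOn.rpow_const continuous_norm.continuousOn
      (fun z hz => Or.inl (hz0 z hz))
  have hFcont : ∀ j k, ContinuousOn (F j k) A := by
    intro j k
    apply ContinuousOn.mul
    · exact Complex.continuous_ofReal.comp_continuousOn hrc
    · apply Continuous.continuousOn
      continuity
  have hFint : ∀ j k, IntegrableOn (F j k) A := fun j k =>
    (hFcont j k).integrableOn_compact hcomp
  have hFreint : ∀ j k, IntegrableOn (fun z => (F j k z).re) A := fun j k =>
    (hFint j k).re
  -- pointwise expansion
  have hw : ∀ w : ℂ, ‖w‖ ^ 2 = (w * (starRingEnd ℂ) w).re := by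
    intro w
    rw [Complex.mul_conj, Complex.ofReal_re, Complex.sq_norm]
  have hpt : ∀ z : ℂ, ‖z‖ ^ c * ‖∑ j, α j * z ^ (j : ℕ)‖ ^ 2
      = ∑ j, ∑ k, (F j k z).re := by
    intro z
    have hexp : (∑ j, α j * z ^ (j:ℕ)) * (starRingEnd ℂ) (∑ k, α k * z ^ (k:ℕ))
        = ∑ j, ∑ k, (α j * (starRingEnd ℂ) (α k)) *
            (z ^ (j:ℕ) * (starRingEnd ℂ) z ^ (k:ℕ)) := by
      rw [map_sum, Finset.sum_mul_sum]
      refine Finset.sum_congr rfl fun j _ => Finset.sum_congr rfl fun k _ => ?_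
      rw [map_mul, map_pow]; ring
    rw [hw, hexp, Complex.re_sum, Finset.mul_sum]
    refine Finset.sum_congr rfl fun j _ => ?_
    rw [Complex.re_sum, Finset.mul_sum]
    refine Finset.sum_congr rfl fun k _ => ?_
    rw [← Complex.re_ofReal_mul]
  -- swap integral and sums
  have hswap : ∫ z in A, ‖z‖ ^ c * ‖∑ j, α j * z ^ (j : ℕ)‖ ^ 2
      = ∑ j, ∑ k, ∫ z in A, (F j k z).re := by
    simp only [hpt]
    rw [integral_finset_sum _ (fun j _ => integrable_finset_sum _ (fun k _ => hFreint j k))]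
    exact Finset.sum_congr rfl fun j _ =>
      integral_finset_sum _ (fun k _ => hFreint j k)
  -- evaluate each term
  have hterm : ∀ j k : Fin (n+1), (∫ z in A, (F j k z).re)
      = if j = k then ‖α j‖ ^ 2 * ∫ z in A, ‖z‖ ^ c * ‖z‖ ^ (2 * (j:ℕ)) else 0 := by
    intro j k
    have hre : ∫ z in A, (F j k z).re = (∫ z in A, F j k z).re := by
      have := integral_re (μ := volume.restrict A) (hFint j k)
      simpa using this
    have hmul : ∀ z : ℂ, F j k z = (α j * (starRingEnd ℂ) (α k)) *
        (((‖z‖ ^ c : ℝ) : ℂ) * (z ^ (j:ℕ) * (starRingEnd ℂ) z ^ (k:ℕ))) := by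
      intro z; rw [hF]; ring
    have hInt : ∫ z in A, F j k z = (α j * (starRingEnd ℂ) (α k)) *
        ∫ z in A, ((‖z‖ ^ c : ℝ) : ℂ) * (z ^ (j:ℕ) * (starRingEnd ℂ) z ^ (k:ℕ)) := by
      simp only [hmul]
      exact integral_const_mul _ _
    by_cases hjk : j = k
    · subst hjk
      simp only [if_pos rfl]
      have hdiag : ∀ z : ℂ, ((‖z‖ ^ c : ℝ) : ℂ) * (z ^ (j:ℕ) * (starRingEnd ℂ) z ^ (j:ℕ))
          = (((‖z‖ ^ c * ‖z‖ ^ (2 * (j:ℕ)) : ℝ)) : ℂ) := by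
        intro z
        have h1 : z ^ (j:ℕ) * (starRingEnd ℂ) z ^ (j:ℕ) = ((‖z‖ ^ (2 * (j:ℕ)) : ℝ) : ℂ) := by
          rw [← mul_pow, Complex.mul_conj]
          rw [pow_mul, ← Complex.ofReal_pow]
          congr 1
          simp [Complex.normSq_eq_norm_sq]
        rw [h1, ← Complex.ofReal_mul]
      rw [hre, hInt]
      simp only [hdiag]
      have hIof : ∫ z in A, ((‖z‖ ^ c * ‖z‖ ^ (2 * (j:ℕ)) : ℝ) : ℂ)
          = ((∫ z in A, ‖z‖ ^ c * ‖z‖ ^ (2 * (j:ℕ)) : ℝ) : ℂ) := integral_ofReal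
      rw [hIof]
      have hc : α j * (starRingEnd ℂ) (α j) = ((‖α j‖ ^ 2 : ℝ) : ℂ) := by
        rw [Complex.mul_conj]
        simp [Complex.normSq_eq_norm_sq]
      rw [hc, ← Complex.ofReal_mul, Complex.ofReal_re]
      simp
    · simp only [if_neg hjk]
      rw [hre, hInt, cross_term_zero s t c (fun h => hjk (Fin.val_injective h))]
      simp
  -- sum up the diagonal
  have hsum : ∫ z in A, ‖z‖ ^ c * ‖∑ j, α j * z ^ (j : ℕ)‖ ^ 2
      = ∑ j : Fin (n+1), ‖α j‖ ^ 2 * ∫ z in A, ‖z‖ ^ c * ‖z‖ ^ (2 * (j:ℕ)) := by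
    rw [hswap]
    refine Finset.sum_congr rfl fun j _ => ?_
    rw [Finset.sum_congr rfl (fun k _ => hterm j k), Finset.sum_ite_eq (Finset.univ) j
      (fun _ => ‖α j‖ ^ 2 * ∫ z in A, ‖z‖ ^ c * ‖z‖ ^ (2 * (j:ℕ)))]
    simp
  rw [hsum]
  -- bound each diagonal integral by the top one
  have hDle : ∀ j : Fin (n+1), (∫ z in A, ‖z‖ ^ c * ‖z‖ ^ (2 * (j:ℕ)))
      ≤ ∫ z in A, ‖z‖ ^ (c + 2 * n) := by
    intro j
    apply setIntegral_mono_on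
    · exact ((hrc.mul (continuous_norm.continuousOn.pow _))).integrableOn_compact hcomp
    · exact (ContinuousOn.rpow_const continuous_norm.continuousOn
        (fun z hz => Or.inl (hz0 z hz))).integrableOn_compact hcomp
    · exact hA
    · intro z hz
      have h1 : ‖z‖ ^ c * ‖z‖ ^ (2 * (j:ℕ)) = ‖z‖ ^ (c + 2 * (j:ℕ)) := by
        rw [← Real.rpow_natCast ‖z‖ (2 * (j:ℕ)), ← Real.rpow_add
          (lt_of_lt_of_le (lt_trans one_pos hs) hz.1)]
        norm_num
      rw [h1]
      apply Real.rpow_le_rpow_of_exponent_le (hz1 z hz)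
      have : (j:ℕ) ≤ n := Nat.lt_succ_iff.mp j.isLt
      have : ((j:ℕ):ℝ) ≤ (n:ℝ) := by exact_mod_cast this
      linarith
  calc ∑ j : Fin (n+1), ‖α j‖ ^ 2 * ∫ z in A, ‖z‖ ^ c * ‖z‖ ^ (2 * (j:ℕ))
      ≤ ∑ j : Fin (n+1), ‖α j‖ ^ 2 * ∫ z in A, ‖z‖ ^ (c + 2 * n) := by
        refine Finset.sum_le_sum fun j _ => ?_
        exact mul_le_mul_of_nonneg_left (hDle j) (by positivity)
    _ = ∫ z in A, ‖z‖ ^ (c + 2 * n) := by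
        rw [← Finset.sum_mul, hα, one_mul]


lemma radial_integral (e s t : ℝ) (h0 : 0 < s) (hst : s ≤ t) (he : e + 2 ≠ 0) :
    ∫ z in {z : ℂ | s ≤ ‖z‖ ∧ ‖z‖ ≤ t}, ‖z‖ ^ e
      = 2 * π * ((t ^ (e + 2) - s ^ (e + 2)) / (e + 2)) := by
  set A := {z : ℂ | s ≤ ‖z‖ ∧ ‖z‖ ≤ t} with hAdef
  have hA : MeasurableSet A := annulus_measurable s t
  set f : ℝ → ℝ := Set.indicator (Set.Icc s t) (fun r => r ^ e) with hf
  have h1 : ∫ z in A, ‖z‖ ^ e = ∫ z : ℂ, f ‖z‖ := by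
    have hind : (Set.indicator A fun z : ℂ => ‖z‖ ^ e) = fun z => f ‖z‖ := by
      ext z
      by_cases hz : z ∈ A
      · rw [Set.indicator_of_mem hz, hf, Set.indicator_of_mem (Set.mem_Icc.2 hz)]
      · rw [Set.indicator_of_notMem hz, hf, Set.indicator_of_notMem
          (fun h => hz (Set.mem_Icc.1 h))]
    rw [← integral_indicator hA, hind]
  have h2 := integral_fun_norm_addHaar (volume : Measure ℂ) f
  have hdim : Module.finrank ℝ ℂ = 2 := Complex.finrank_real_complex
  rw [hdim] at h2
  have hball : (volume (Metric.ball (0:ℂ) 1)).toReal = π := by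
    rw [Complex.volume_ball]
    simp [ENNReal.toReal_mul]
  rw [h1, h2, measureReal_def, hball]
  have h3 : ∫ y in Set.Ioi (0:ℝ), y ^ (2 - 1) • f y
      = ∫ y in Set.Ioi (0:ℝ), Set.indicator (Set.Icc s t) (fun r => r * r ^ e) y := by
    congr 1
    ext y
    by_cases hy : y ∈ Set.Icc s t
    · rw [Set.indicator_of_mem hy, hf, Set.indicator_of_mem hy]
      simp [pow_one]
    · rw [Set.indicator_of_notMem hy, hf, Set.indicator_of_notMem hy]
      simp
  have hsub2 : Set.Icc s t ⊆ Set.Ioi (0:ℝ) := fun y hy => lt_of_lt_of_le h0 hy.1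
  rw [h3, integral_indicator measurableSet_Icc, Measure.restrict_restrict measurableSet_Icc,
    Set.inter_eq_self_of_subset_left hsub2]
  have h4 : ∫ y in Set.Icc s t, y * y ^ e = ∫ y in s..t, y ^ (e + 1) := by
    rw [intervalIntegral.integral_of_le hst, ← integral_Icc_eq_integral_Ioc]
    apply setIntegral_congr_fun measurableSet_Icc
    intro y hy
    have hy0 : 0 < y := lt_of_lt_of_le h0 hy.1
    show y * y ^ e = y ^ (e + 1)
    rw [Real.rpow_add hy0, Real.rpow_one]
    ring
  rw [h4, integral_rpow (Or.inr ⟨by intro h; exact he (by linarith), by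
      intro h
      rcases Set.mem_uIcc.1 h with ⟨h1', _⟩ | ⟨_, h2'⟩
      · linarith
      · linarith⟩)]
  have : e + 1 + 1 = e + 2 := by ring
  rw [this]
  simp only [smul_eq_mul, nsmul_eq_mul]
  push_cast
  ring


/-- Tail estimate for normalized linear combinations of Aharonov–Casher zero modes:
`(1/ϱ²)∫_{ϱ≤|x|≤2ϱ} |Σ α_j χ_j|² ≤ (4π/(1+ε+N−F))(2ϱ)^{2(N−F+ε)}`, which tends to `0`
as `ϱ → ∞`. -/
theorem ac_tail_estimate
    (φ : EuclideanSpace ℝ (Fin 2) → ℝ) (hφ : Continuous φ)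
    (N : ℕ) (η ε R F : ℝ)
    (hη : η ∈ Set.Ioc (0 : ℝ) 1) (hε : 0 < ε) (hεη : ε < η) (hR : 1 < R)
    (hF : F = N + η)
    (hasymp : ∀ x : EuclideanSpace ℝ (Fin 2), R < ‖x‖ →
      |φ x - F * Real.log ‖x‖| < ε * Real.log ‖x‖)
    (α : Fin (N + 1) → ℂ) (hα : ∑ j, ‖α j‖ ^ 2 = 1)
    (ϱ : ℝ) (hϱ : R < ϱ) :
    (1 / ϱ ^ 2) *
        (∫ x in {x : EuclideanSpace ℝ (Fin 2) | ϱ ≤ ‖x‖ ∧ ‖x‖ ≤ 2 * ϱ},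
          ‖∑ j, α j * (Complex.exp (-(φ x : ℂ)) *
            ((x 0 : ℂ) + (x 1 : ℂ) * Complex.I) ^ (j : ℕ))‖ ^ 2)
      ≤ (4 * π / (1 + ε + N - F)) * (2 * ϱ) ^ (2 * (N - F + ε)) ∧
    Tendsto (fun ϱ : ℝ => (4 * π / (1 + ε + N - F)) * (2 * ϱ) ^ (2 * (N - F + ε)))
      atTop (nhds 0) := by
  obtain ⟨hη0, hη1⟩ := hη
  have hπ := Real.pi_pos
  constructor
  · -- main estimate
    have hϱ1 : 1 < ϱ := lt_trans hR hϱ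
    have hϱ0 : 0 < ϱ := lt_trans one_pos hϱ1
    set c : ℝ := 2 * (ε - F) with hc
    set g : ℝ := c + 2 * (N : ℝ) + 2 with hgdef
    have hg2 : g = 2 * (1 + ε - η) := by rw [hgdef, hc, hF]; ring
    have hgpos : 0 < g := by rw [hg2]; linarith
    set AE := {x : EuclideanSpace ℝ (Fin 2) | ϱ ≤ ‖x‖ ∧ ‖x‖ ≤ 2 * ϱ} with hAE
    set Ac := {z : ℂ | ϱ ≤ ‖z‖ ∧ ‖z‖ ≤ 2 * ϱ} with hAc
    have hEm : MeasurableSet AE := by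
      have : AE = (fun x : EuclideanSpace ℝ (Fin 2) => ‖x‖) ⁻¹' Set.Icc ϱ (2 * ϱ) := rfl
      rw [this]
      exact measurableSet_Icc.preimage continuous_norm.measurable
    have hEcomp : IsCompact AE := by
      have hcl : IsClosed AE := by
        have : AE = (fun x : EuclideanSpace ℝ (Fin 2) => ‖x‖) ⁻¹' Set.Icc ϱ (2 * ϱ) := rfl
        rw [this]
        exact isClosed_Icc.preimage continuous_norm
      exact (isCompact_closedBall (0 : EuclideanSpace ℝ (Fin 2)) (2 * ϱ)).of_isClosed_subset hcl
        (fun x hx => by simpa [Metric.mem_closedBall, dist_eq_norm] using hx.2)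
    have hTapp : ∀ x : EuclideanSpace ℝ (Fin 2),
        Complex.orthonormalBasisOneI.repr.symm x = (x 0 : ℂ) + (x 1 : ℂ) * Complex.I :=
      fun x => Complex.orthonormalBasisOneI_repr_symm_apply x
    have hTnorm : ∀ x : EuclideanSpace ℝ (Fin 2),
        ‖(x 0 : ℂ) + (x 1 : ℂ) * Complex.I‖ = ‖x‖ := fun x => by
      rw [← hTapp x]; exact LinearIsometryEquiv.norm_map _ x
    have hTc : Continuous (fun x : EuclideanSpace ℝ (Fin 2) =>
        (x 0 : ℂ) + (x 1 : ℂ) * Complex.I) := by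
      have : (fun x : EuclideanSpace ℝ (Fin 2) => (x 0 : ℂ) + (x 1 : ℂ) * Complex.I)
          = ⇑(Complex.orthonormalBasisOneI.repr.symm) := by
        funext x; exact (hTapp x).symm
      rw [this]
      exact (Complex.orthonormalBasisOneI.repr.symm).continuous
    -- step 1 : pointwise bound and set-integral monotonicity
    have hfcont : Continuous (fun x : EuclideanSpace ℝ (Fin 2) =>
        ‖∑ j, α j * (Complex.exp (-(φ x : ℂ)) *
          ((x 0 : ℂ) + (x 1 : ℂ) * Complex.I) ^ (j : ℕ))‖ ^ 2) := by
      apply Continuous.pow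
      apply Continuous.norm
      apply continuous_finset_sum
      intro j _
      exact continuous_const.mul
        ((Complex.continuous_exp.comp ((Complex.continuous_ofReal.comp hφ).neg)).mul
          (hTc.pow _))
    have hGcont : ContinuousOn (fun x : EuclideanSpace ℝ (Fin 2) =>
        ‖x‖ ^ c * ‖∑ j, α j * ((x 0 : ℂ) + (x 1 : ℂ) * Complex.I) ^ (j : ℕ)‖ ^ 2) AE := by
      apply ContinuousOn.mul
      · exact ContinuousOn.rpow_const continuous_norm.continuousOn
          (fun x hx => Or.inl (ne_of_gt (lt_of_lt_of_le hϱ0 hx.1)))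
      · exact (Continuous.pow (Continuous.norm (continuous_finset_sum _
          (fun j _ => continuous_const.mul (hTc.pow _)))) 2).continuousOn
    have hmono : (∫ x in AE,
          ‖∑ j, α j * (Complex.exp (-(φ x : ℂ)) *
            ((x 0 : ℂ) + (x 1 : ℂ) * Complex.I) ^ (j : ℕ))‖ ^ 2)
        ≤ ∫ x in AE,
          ‖x‖ ^ c * ‖∑ j, α j * ((x 0 : ℂ) + (x 1 : ℂ) * Complex.I) ^ (j : ℕ)‖ ^ 2 := by
      apply setIntegral_mono_on
      · exact hfcont.continuousOn.integrableOn_compact hEcomp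
      · exact hGcont.integrableOn_compact hEcomp
      · exact hEm
      · intro x hx
        have hxR : R < ‖x‖ := lt_of_lt_of_le hϱ hx.1
        have hx1 : 1 < ‖x‖ := lt_trans hR hxR
        have hxpos : 0 < ‖x‖ := lt_trans one_pos hx1
        have hlog := abs_lt.1 (hasymp x hxR)
        have hfac : (∑ j, α j * (Complex.exp (-(φ x : ℂ)) *
              ((x 0 : ℂ) + (x 1 : ℂ) * Complex.I) ^ (j : ℕ)))
            = Complex.exp (-(φ x : ℂ)) *
              ∑ j, α j * ((x 0 : ℂ) + (x 1 : ℂ) * Complex.I) ^ (j : ℕ) := by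
          rw [Finset.mul_sum]
          exact Finset.sum_congr rfl fun j _ => by ring
        have hnexp : ‖Complex.exp (-(φ x : ℂ))‖ = Real.exp (-(φ x)) := by
          rw [Complex.norm_exp]
          congr 1
        have hexple : Real.exp (-(φ x)) ≤ ‖x‖ ^ (ε - F) := by
          rw [Real.rpow_def_of_pos hxpos]
          apply Real.exp_le_exp.2
          have h2 : Real.log ‖x‖ * (ε - F) = ε * Real.log ‖x‖ - F * Real.log ‖x‖ := by ring
          rw [h2]
          linarith [hlog.1]
        have hsq : (‖x‖ ^ (ε - F)) ^ 2 = ‖x‖ ^ c := by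
          rw [← Real.rpow_natCast (‖x‖ ^ (ε - F)) 2, ← Real.rpow_mul (norm_nonneg x), hc,
            mul_comm]
          norm_num
        calc ‖∑ j, α j * (Complex.exp (-(φ x : ℂ)) *
              ((x 0 : ℂ) + (x 1 : ℂ) * Complex.I) ^ (j : ℕ))‖ ^ 2
            = Real.exp (-(φ x)) ^ 2 *
              ‖∑ j, α j * ((x 0 : ℂ) + (x 1 : ℂ) * Complex.I) ^ (j : ℕ)‖ ^ 2 := by
              rw [hfac, norm_mul, mul_pow, hnexp]
          _ ≤ (‖x‖ ^ (ε - F)) ^ 2 *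
              ‖∑ j, α j * ((x 0 : ℂ) + (x 1 : ℂ) * Complex.I) ^ (j : ℕ)‖ ^ 2 := by
              exact mul_le_mul_of_nonneg_right
                (pow_le_pow_left₀ (Real.exp_nonneg _) hexple 2) (sq_nonneg _)
          _ = ‖x‖ ^ c *
              ‖∑ j, α j * ((x 0 : ℂ) + (x 1 : ℂ) * Complex.I) ^ (j : ℕ)‖ ^ 2 := by
              rw [hsq]
    -- step 2 : transfer to ℂ
    have htrans : (∫ x in AE,
          ‖x‖ ^ c * ‖∑ j, α j * ((x 0 : ℂ) + (x 1 : ℂ) * Complex.I) ^ (j : ℕ)‖ ^ 2)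
        = ∫ z in Ac, ‖z‖ ^ c * ‖∑ j, α j * z ^ (j : ℕ)‖ ^ 2 := by
      have hpre : (⇑(Complex.orthonormalBasisOneI.repr.symm)) ⁻¹' Ac = AE := by
        ext x
        simp only [Set.mem_preimage, hAc, hAE, Set.mem_setOf_eq,
          LinearIsometryEquiv.norm_map]
      have hmp : MeasurePreserving (⇑(Complex.orthonormalBasisOneI.repr.symm))
          volume volume := (Complex.orthonormalBasisOneI.repr.symm).measurePreserving
      have hemb : MeasurableEmbedding (⇑(Complex.orthonormalBasisOneI.repr.symm)) :=
        (Complex.orthonormalBasisOneI.repr.symm).toHomeomorph.measurableEmbedding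
      have := hmp.setIntegral_preimage_emb hemb
        (fun z => ‖z‖ ^ c * ‖∑ j, α j * z ^ (j : ℕ)‖ ^ 2) Ac
      rw [hpre] at this
      rw [← this]
      apply setIntegral_congr_fun hEm
      intro x _
      simp only [hTapp x, hTnorm x]
    -- step 3 : Parseval bound and radial integral
    have hpar := parseval_bound N α hα c ϱ (2 * ϱ) hϱ1
    have hrad := radial_integral (c + 2 * N) ϱ (2 * ϱ) hϱ0 (by linarith)
      (by rw [show c + 2 * (N:ℝ) + 2 = g from rfl]; exact ne_of_gt hgpos)
    have hItot : (∫ x in AE,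
          ‖∑ j, α j * (Complex.exp (-(φ x : ℂ)) *
            ((x 0 : ℂ) + (x 1 : ℂ) * Complex.I) ^ (j : ℕ))‖ ^ 2)
        ≤ 2 * π * (((2 * ϱ) ^ g - ϱ ^ g) / g) := by
      have := hmono.trans (le_of_eq htrans) |>.trans hpar
      rw [hrad] at this
      exact this
    -- step 4 : arithmetic
    have hone : 1 + ε + (N : ℝ) - F = g / 2 := by rw [hF, hg2]; ring
    have hq : (2 * ϱ) ^ g = 4 * ϱ ^ 2 * (2 * ϱ) ^ (2 * ((N : ℝ) - F + ε)) := by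
      have hgg : g = 2 * ((N : ℝ) - F + ε) + 2 := by rw [hgdef, hc]; ring
      rw [hgg, Real.rpow_add (by linarith : (0:ℝ) < 2 * ϱ)]
      have h2 : (2 * ϱ) ^ ((2:ℕ) : ℝ) = 4 * ϱ ^ 2 := by
        rw [Real.rpow_natCast]; ring
      rw [show ((2:ℕ) : ℝ) = (2 : ℝ) from by norm_num] at h2
      rw [h2]; ring
    have ha : 0 < (2 * ϱ) ^ (2 * ((N : ℝ) - F + ε)) :=
      Real.rpow_pos_of_pos (by linarith) _
    have hb : 0 < ϱ ^ g := Real.rpow_pos_of_pos hϱ0 _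
    have hfinal : (1 / ϱ ^ 2) * (2 * π * (((2 * ϱ) ^ g - ϱ ^ g) / g))
        ≤ 4 * π / (1 + ε + N - F) * (2 * ϱ) ^ (2 * ((N : ℝ) - F + ε)) := by
      rw [hone, hq]
      have hkey : (1 / ϱ ^ 2) * (2 * π *
            ((4 * ϱ ^ 2 * (2 * ϱ) ^ (2 * ((N : ℝ) - F + ε)) - ϱ ^ g) / g))
          = 4 * π / (g / 2) * (2 * ϱ) ^ (2 * ((N : ℝ) - F + ε))
            - 2 * π * (ϱ ^ g) / (g * ϱ ^ 2) := by
        field_simp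
      rw [hkey]
      have : 0 < 2 * π * (ϱ ^ g) / (g * ϱ ^ 2) := by positivity
      linarith
    calc (1 / ϱ ^ 2) * (∫ x in AE,
          ‖∑ j, α j * (Complex.exp (-(φ x : ℂ)) *
            ((x 0 : ℂ) + (x 1 : ℂ) * Complex.I) ^ (j : ℕ))‖ ^ 2)
        ≤ (1 / ϱ ^ 2) * (2 * π * (((2 * ϱ) ^ g - ϱ ^ g) / g)) :=
          mul_le_mul_of_nonneg_left hItot (by positivity)
      _ ≤ 4 * π / (1 + ε + N - F) * (2 * ϱ) ^ (2 * ((N : ℝ) - F + ε)) := hfinal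
  · -- tendsto
    have hexp : 2 * ((N : ℝ) - F + ε) = -(2 * (η - ε)) := by rw [hF]; ring
    have h1 : Tendsto (fun ϱ : ℝ => 2 * ϱ) atTop atTop :=
      Tendsto.const_mul_atTop two_pos tendsto_id
    have h2 : Tendsto (fun x : ℝ => x ^ (2 * ((N : ℝ) - F + ε))) atTop (nhds 0) := by
      simp only [hexp]
      exact tendsto_rpow_neg_atTop (by linarith)
    have h3 := (h2.comp h1).const_mul (4 * π / (1 + ε + N - F))
    simpa using h3
end
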